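/- arXiv:1501.05998 — 8 statements merged into one kernel-verified Lean document; each statement's English description precedes it below -/
import Mathlib

section
/- Let n be a non-negative integer and let s(k) denote the sum of the binary digits of k. Then for all real numbers x and y, (x+y)^{s(n)} = ∑ x^{s(m)} y^{s(n-m)}, where the sum ranges over all integers m with 0 ≤ m ≤ n such that the pair (m, n-m) is carry-free, i.e. s(m) + s(n-m) = s(n). -/
/-- `s k` is the sum of the binary digits of `k`. -/
def s (k : ℕ) : ℕ := (Nat.digits 2 k).sum

lemma s_even (k : ℕ) : s (2 * k) = s k := by
  rcases Nat.eq_zero_or_pos k with rfl | hk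
  · rfl
  · unfold s
    rw [Nat.digits_def' (by norm_num : 1 < 2) (by omega : 0 < 2 * k)]
    have h1 : 2 * k % 2 = 0 := by omega
    have h2 : 2 * k / 2 = k := by omega
    rw [h1, h2]; simp

lemma s_odd (k : ℕ) : s (2 * k + 1) = s k + 1 := by
  unfold s
  rw [Nat.digits_def' (by norm_num : 1 < 2) (by omega : 0 < 2 * k + 1)]
  have h1 : (2 * k + 1) % 2 = 1 := by omega
  have h2 : (2 * k + 1) / 2 = k := by omega
  rw [h1, h2]; simp [add_comm]

lemma s_succ_le (k : ℕ) : s (k + 1) ≤ s k + 1 := by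
  induction k using Nat.strong_induction_on with
  | _ k ih =>
    rcases Nat.even_or_odd k with ⟨k', hk⟩ | ⟨k', hk⟩
    · have : k = 2 * k' := by omega
      subst this
      rw [show 2 * k' + 1 = 2 * k' + 1 from rfl, s_odd, s_even]
    · subst hk
      have h1 : 2 * k' + 1 + 1 = 2 * (k' + 1) := by ring
      rw [h1, s_even, s_odd]
      have := ih k' (by omega)
      omega

lemma s_add_le (a b : ℕ) : s (a + b) ≤ s a + s b := by
  induction a using Nat.strong_induction_on generalizing b with
  | _ a ih =>
    rcases Nat.eq_zero_or_pos a with rfl | ha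
    · simp
    rcases Nat.even_or_odd a with ⟨a', hA⟩ | ⟨a', hA⟩ <;>
      rcases Nat.even_or_odd b with ⟨b', hB⟩ | ⟨b', hB⟩
    · have : a = 2 * a' := by omega
      have hb : b = 2 * b' := by omega
      subst this; subst hb
      have h : 2 * a' + 2 * b' = 2 * (a' + b') := by ring
      rw [h, s_even, s_even, s_even]
      exact ih a' (by omega) b'
    · have h1 : a = 2 * a' := by omega
      subst h1; subst hB
      have h : 2 * a' + (2 * b' + 1) = 2 * (a' + b') + 1 := by ring
      rw [h, s_odd, s_even, s_odd]
      have := ih a' (by omega) b'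
      omega
    · have hb : b = 2 * b' := by omega
      subst hA; subst hb
      have h : 2 * a' + 1 + 2 * b' = 2 * (a' + b') + 1 := by ring
      rw [h, s_odd, s_odd, s_even]
      have := ih a' (by omega) b'
      omega
    · subst hA; subst hB
      have h : 2 * a' + 1 + (2 * b' + 1) = 2 * (a' + b' + 1) := by ring
      rw [h, s_even, s_odd, s_odd]
      have h1 := s_succ_le (a' + b')
      have h2 := ih a' (by omega) b'
      omega

/-- **Digital Binomial Theorem.** For every non-negative integer `n` and all real `x, y`,
`(x+y)^{s(n)} = ∑ x^{s(m)} y^{s(n-m)}`, the sum over all `0 ≤ m ≤ n` such that the pair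
`(m, n-m)` is carry-free, i.e. `s(m) + s(n-m) = s(n)`. -/

theorem digital_binomial_theorem (n : ℕ) (x y : ℝ) :
    (x + y) ^ s n =
      ∑ m ∈ (Finset.range (n + 1)).filter (fun m => s m + s (n - m) = s n),
        x ^ s m * y ^ s (n - m) := by
  induction n using Nat.strong_induction_on with
  | _ n ih =>
  rcases Nat.eq_zero_or_pos n with rfl | hn
  · norm_num [s, Finset.filter_singleton]
  rcases Nat.even_or_odd n with ⟨q, hq⟩ | ⟨q, hq⟩
  · -- even case, n = 2*q, q ≥ 1
    have hq2 : n = 2 * q := by omega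
    subst hq2
    have hq0 : 0 < q := by omega
    have hset : (Finset.range (2 * q + 1)).filter (fun m => s m + s (2 * q - m) = s (2 * q))
        = ((Finset.range (q + 1)).filter (fun a => s a + s (q - a) = s q)).image (fun a => 2 * a) := by
      ext m
      simp only [Finset.mem_filter, Finset.mem_image, Finset.mem_range]
      constructor
      · rintro ⟨hm, hc⟩
        rcases Nat.even_or_odd m with ⟨a, hA⟩ | ⟨a, hA⟩
        · have hma : m = 2 * a := by omega
          subst hma
          refine ⟨a, ⟨by omega, ?_⟩, rfl⟩
          have h1 : 2 * q - 2 * a = 2 * (q - a) := by omega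
          rw [h1, s_even, s_even, s_even] at hc
          exact hc
        · exfalso
          subst hA
          have haq : a ≤ q - 1 := by omega
          have h1 : 2 * q - (2 * a + 1) = 2 * (q - a - 1) + 1 := by omega
          rw [h1, s_odd, s_odd, s_even] at hc
          have h2 : s (q - 1 + 1) ≤ s (q - 1) + 1 := s_succ_le (q - 1)
          have h3 : s (a + (q - a - 1)) ≤ s a + s (q - a - 1) := s_add_le _ _
          have h4 : a + (q - a - 1) = q - 1 := by omega
          have h5 : q - 1 + 1 = q := by omega
          rw [h4] at h3
          rw [h5] at h2
          omega
      · rintro ⟨a, ⟨ha, hc⟩, rfl⟩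
        have h1 : 2 * q - 2 * a = 2 * (q - a) := by omega
        constructor
        · omega
        · rw [h1, s_even, s_even, s_even]
          exact hc
    rw [hset, Finset.sum_image (by intro a _ b _ h; simp only at h; omega)]
    have hL : s (2 * q) = s q := s_even q
    rw [hL, ih q (by omega)]
    apply Finset.sum_congr rfl
    intro a ha
    simp only [Finset.mem_filter, Finset.mem_range] at ha
    have h1 : 2 * q - 2 * a = 2 * (q - a) := by omega
    rw [h1, s_even, s_even]
  · -- odd case, n = 2*q + 1
    subst hq
    have hset : (Finset.range (2 * q + 1 + 1)).filter (fun m => s m + s (2 * q + 1 - m) = s (2 * q + 1))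
        = ((Finset.range (q + 1)).filter (fun a => s a + s (q - a) = s q)).image (fun a => 2 * a)
          ∪ ((Finset.range (q + 1)).filter (fun a => s a + s (q - a) = s q)).image (fun a => 2 * a + 1) := by
      ext m
      simp only [Finset.mem_filter, Finset.mem_image, Finset.mem_range, Finset.mem_union]
      constructor
      · rintro ⟨hm, hc⟩
        rcases Nat.even_or_odd m with ⟨a, hA⟩ | ⟨a, hA⟩
        · have hma : m = 2 * a := by omega
          subst hma
          left
          refine ⟨a, ⟨by omega, ?_⟩, rfl⟩
          have h1 : 2 * q + 1 - 2 * a = 2 * (q - a) + 1 := by omega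
          rw [h1, s_odd, s_even, s_odd] at hc
          omega
        · subst hA
          right
          refine ⟨a, ⟨by omega, ?_⟩, rfl⟩
          have h1 : 2 * q + 1 - (2 * a + 1) = 2 * (q - a) := by omega
          rw [h1, s_even, s_odd, s_odd] at hc
          omega
      · rintro (⟨a, ⟨ha, hc⟩, rfl⟩ | ⟨a, ⟨ha, hc⟩, rfl⟩)
        · have h1 : 2 * q + 1 - 2 * a = 2 * (q - a) + 1 := by omega
          refine ⟨by omega, ?_⟩
          rw [h1, s_odd, s_even, s_odd]
          omega
        · have h1 : 2 * q + 1 - (2 * a + 1) = 2 * (q - a) := by omega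
          refine ⟨by omega, ?_⟩
          rw [h1, s_even, s_odd, s_odd]
          omega
    have hdisj : Disjoint
        (((Finset.range (q + 1)).filter (fun a => s a + s (q - a) = s q)).image (fun a => 2 * a))
        (((Finset.range (q + 1)).filter (fun a => s a + s (q - a) = s q)).image (fun a => 2 * a + 1)) := by
      rw [Finset.disjoint_left]
      rintro m hm hm'
      simp only [Finset.mem_image] at hm hm'
      obtain ⟨a, _, ha⟩ := hm
      obtain ⟨b, _, hb⟩ := hm'
      omega
    rw [hset, Finset.sum_union hdisj,
      Finset.sum_image (by intro a _ b _ h; simp only at h; omega),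
      Finset.sum_image (by intro a _ b _ h; simp only at h; omega)]
    have hL : s (2 * q + 1) = s q + 1 := s_odd q
    rw [hL, pow_succ]
    rw [ih q (by omega)]
    rw [Finset.sum_mul, ← Finset.sum_add_distrib]
    apply Finset.sum_congr rfl
    intro a ha
    simp only [Finset.mem_filter, Finset.mem_range] at ha
    have h1 : 2 * q + 1 - 2 * a = 2 * (q - a) + 1 := by omega
    have h2 : 2 * q + 1 - (2 * a + 1) = 2 * (q - a) := by omega
    rw [h1, h2, s_odd, s_even, s_odd, s_even]
    ring
end

section
/- Let b ≥ 2 and N ≥ 1 be integers and let n be a non-negative integer with n < b^N, with base-b digits d_0(n), d_1(n), …, d_{N-1}(n). Then for all real x and y: ∏_{i=0}^{N-1} binom(x+y+d_i(n)-1, d_i(n)) = ∑_{0 ≤ m ⪯ n} [ ∏_{i=0}^{N-1} binom(x+d_i(m)-1, d_i(m)) · ∏_{i=0}^{N-1} binom(y+d_i(n-m)-1, d_i(n-m)) ], where the sum is over all m with m ⪯ n in base b. -/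
/-- The generalized binomial coefficient `binom(x,k) = x(x-1)⋯(x-k+1)/k!`. -/
noncomputable def binom (x : ℝ) (k : ℕ) : ℝ :=
  (∏ i ∈ Finset.range k, (x - i)) / (Nat.factorial k)

/-- `dig b n i` is the `i`-th digit of `n` in base `b`. -/
def dig (b n i : ℕ) : ℕ := n / b ^ i % b

lemma desc_smeval (x : ℝ) :
    ∀ k, Polynomial.smeval (descPochhammer ℤ k) x = ∏ i ∈ Finset.range k, (x - i)
  | 0 => by simp [descPochhammer_zero, Polynomial.smeval_one]
  | (k+1) => by
    rw [descPochhammer_succ_right, Polynomial.smeval_mul, desc_smeval x k,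
      Finset.prod_range_succ]
    congr 1
    rw [Polynomial.smeval_sub, Polynomial.smeval_X, Polynomial.smeval_natCast]
    simp

lemma binom_eq_choose (x : ℝ) (k : ℕ) : binom x k = Ring.choose x k := by
  have h := Ring.descPochhammer_eq_factorial_smul_choose (R := ℝ) x k
  rw [desc_smeval] at h
  rw [binom, h, nsmul_eq_mul]
  field_simp

lemma binom_rise (x : ℝ) (k : ℕ) : binom (x + k - 1) k = (-1)^k * binom (-x) k := by
  unfold binom
  rw [← mul_div_assoc]
  congr 1
  have h1 : (-1:ℝ)^k * ∏ i ∈ Finset.range k, (-x - (i:ℝ)) = ∏ i ∈ Finset.range k, (x + i) := by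
    have hc : (-1:ℝ)^k = ∏ _i ∈ Finset.range k, (-1:ℝ) := by simp
    rw [hc, ← Finset.prod_mul_distrib]
    exact Finset.prod_congr rfl fun i _ => by ring
  rw [h1, ← Finset.prod_range_reflect (fun i => x + i) k]
  refine Finset.prod_congr rfl fun i hi => ?_
  have hik : i < k := Finset.mem_range.mp hi
  have h : ((k - 1 - i : ℕ) : ℝ) = (k : ℝ) - 1 - i := by
    have h1 : (1:ℕ) ≤ k := by omega
    have h2 : i ≤ k - 1 := by omega
    push_cast [Nat.cast_sub h2, Nat.cast_sub h1]
    ring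
  show x + (k:ℝ) - 1 - i = x + ((k - 1 - i : ℕ) : ℝ)
  rw [h]; ring

lemma vandermonde (x y : ℝ) (k : ℕ) :
    binom (x + y + k - 1) k =
      ∑ j ∈ Finset.range (k + 1),
        binom (x + j - 1) j * binom (y + ((k - j : ℕ) : ℝ) - 1) (k - j) := by
  rw [binom_rise, binom_eq_choose, neg_add, Ring.add_choose_eq k (Commute.all _ _),
    Finset.Nat.sum_antidiagonal_eq_sum_range_succ_mk, Finset.mul_sum]
  refine Finset.sum_congr rfl fun j hj => ?_
  have hjk : j ≤ k := by simpa using Finset.mem_range_succ_iff.mp hj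
  rw [binom_rise, binom_rise, binom_eq_choose, binom_eq_choose]
  have : (-1:ℝ)^k = (-1)^j * (-1)^(k-j) := by
    rw [← pow_add]; congr 1; omega
  rw [this]; ring

lemma dig_zero (b m : ℕ) : dig b m 0 = m % b := by simp [dig]

lemma dig_succ (b m i : ℕ) : dig b m (i + 1) = dig b (m / b) i := by
  rw [dig, dig, pow_succ', Nat.div_div_eq_div_mul]

lemma sub_split (b q r m' s : ℕ) (hm : m' ≤ q) (hs : s ≤ r) :
    (b * q + r) - (b * m' + s) = b * (q - m') + (r - s) := by
  obtain ⟨t, rfl⟩ := Nat.exists_eq_add_of_le hm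
  rw [Nat.mul_add, Nat.add_sub_cancel_left]
  generalize b * m' = A
  generalize b * t = C
  omega

open Classical in
theorem main_digital (b : ℕ) (hb : 2 ≤ b) : ∀ N, ∀ n < b ^ N, ∀ x y : ℝ,
    ∏ i ∈ Finset.range N, binom (x + y + dig b n i - 1) (dig b n i) =
      ∑ m ∈ (Finset.range (n + 1)).filter (fun m => ∀ i, dig b m i ≤ dig b n i),
        (∏ i ∈ Finset.range N, binom (x + dig b m i - 1) (dig b m i)) *
          ∏ i ∈ Finset.range N, binom (y + dig b (n - m) i - 1) (dig b (n - m) i) := by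
  have hb0 : 0 < b := by omega
  intro N
  induction N with
  | zero =>
    intro n hn x y
    have hn0 : n = 0 := by simpa using hn
    subst hn0
    simp [Finset.range_one, Finset.filter_singleton]
  | succ N ih =>
    intro n hn x y
    have hq : n / b < b ^ N := by
      rw [Nat.div_lt_iff_lt_mul hb0, ← pow_succ]; exact hn
    have hr : n % b < b := Nat.mod_lt _ hb0
    have hsplit : b * (n / b) + n % b = n := by
      exact Nat.div_add_mod n b
    rw [Finset.prod_range_succ']
    simp only [dig_succ, dig_zero]
    rw [ih (n / b) hq x y, vandermonde, Finset.sum_mul_sum, ← Finset.sum_product']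
    have hmod : ∀ m' s : ℕ, s < b → (b * m' + s) % b = s := fun m' s hs => by
      rw [add_comm, Nat.add_mul_mod_self_left, Nat.mod_eq_of_lt hs]
    have hdiv : ∀ m' s : ℕ, s < b → (b * m' + s) / b = m' := fun m' s hs => by
      rw [Nat.mul_add_div hb0, Nat.div_eq_of_lt hs, add_zero]
    refine Finset.sum_bij' (fun p _ => b * p.1 + p.2) (fun m _ => (m / b, m % b)) ?_ ?_ ?_ ?_ ?_
    all_goals try dsimp only
    · rintro ⟨m', s⟩ hp
      dsimp only
      rw [Finset.mem_product, Finset.mem_filter, Finset.mem_range, Finset.mem_range] at hp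
      obtain ⟨⟨hm1, hm2⟩, hs1⟩ := hp
      have hm'q : m' ≤ n / b := by omega
      have hsr : s ≤ n % b := by omega
      rw [Finset.mem_filter, Finset.mem_range]
      constructor
      · have : b * m' ≤ b * (n / b) := Nat.mul_le_mul_left b hm'q
        omega
      · intro i
        cases i with
        | zero => rw [dig_zero, dig_zero, hmod m' s (by omega)]; exact hsr
        | succ i => rw [dig_succ, dig_succ, hdiv m' s (by omega)]; exact hm2 i
    · intro m hm
      rw [Finset.mem_filter, Finset.mem_range] at hm
      obtain ⟨hm1, hm2⟩ := hm
      rw [Finset.mem_product, Finset.mem_filter, Finset.mem_range, Finset.mem_range]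
      refine ⟨⟨Nat.lt_succ_of_le (Nat.div_le_div_right (by omega)), fun i => ?_⟩, ?_⟩
      · rw [← dig_succ, ← dig_succ]; exact hm2 (i + 1)
      · have := hm2 0
        rw [dig_zero, dig_zero] at this
        omega
    · rintro ⟨m', s⟩ hp
      dsimp only
      rw [Finset.mem_product, Finset.mem_filter, Finset.mem_range, Finset.mem_range] at hp
      have hs : s < b := by omega
      simp [hdiv m' s hs, hmod m' s hs]
    · intro m hm
      simp [Nat.div_add_mod]
    · rintro ⟨m', s⟩ hp
      dsimp only
      rw [Finset.mem_product, Finset.mem_filter, Finset.mem_range, Finset.mem_range] at hp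
      obtain ⟨⟨hm1, hm2⟩, hs1⟩ := hp
      have hm'q : m' ≤ n / b := by omega
      have hsr : s ≤ n % b := by omega
      have hs : s < b := by omega
      have hrs : n % b - s < b := by omega
      have hnm : n - (b * m' + s) = b * (n / b - m') + (n % b - s) := by
        conv_lhs => rw [← hsplit]
        exact sub_split b (n / b) (n % b) m' s hm'q hsr
      rw [Finset.prod_range_succ', Finset.prod_range_succ']
      simp only [dig_succ, dig_zero, hnm, hdiv m' s hs, hmod m' s hs,
        hdiv (n / b - m') (n % b - s) hrs, hmod (n / b - m') (n % b - s) hrs]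
      ring

open Classical in

/-- **Generalized Digital Binomial Theorem.** For `b ≥ 2`, `N ≥ 1` and `n < b^N` with base-`b`
digits `d_i(n)`, and all real `x, y`:
`∏_{i<N} binom(x+y+d_i(n)-1, d_i(n)) = ∑_{0 ≤ m ⪯ n} ∏_{i<N} binom(x+d_i(m)-1, d_i(m)) ·
∏_{i<N} binom(y+d_i(n-m)-1, d_i(n-m))`, the sum over all `m` digitally dominated by `n`. -/
theorem digital_binomial_theorem_base_b (b N : ℕ) (hb : 2 ≤ b) (hN : 1 ≤ N)
    (n : ℕ) (hn : n < b ^ N) (x y : ℝ) :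
    ∏ i ∈ Finset.range N, binom (x + y + dig b n i - 1) (dig b n i) =
      ∑ m ∈ (Finset.range (n + 1)).filter (fun m => ∀ i, dig b m i ≤ dig b n i),
        (∏ i ∈ Finset.range N, binom (x + dig b m i - 1) (dig b m i)) *
          ∏ i ∈ Finset.range N, binom (y + dig b (n - m) i - 1) (dig b (n - m) i) := by
  exact main_digital b hb N n hn x y
end

section
/- Let b ≥ 2 and N ≥ 1 be integers, x a real number, and let α_N(j,k) denote the (j,k)-entry of the generalized Sierpinski matrix S_{b,N}(x), for 0 ≤ j,k ≤ b^N - 1. Then α_N(j,k) = ∏_{i} binom(x + d_i - 1, d_i) if k ≤ j and k ⪯ j in base b, where d_0, d_1, …, d_{N-1} are the base-b digits of j-k; and α_N(j,k) = 0 otherwise. -/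
/-- The generalized Sierpinski matrix `S_{b,1}(x)`, with `(j,k)`-entry
`binom(x+j-k-1, j-k)` for `k ≤ j` and `0` otherwise. -/
noncomputable def S1 (b : ℕ) (x : ℝ) : Matrix (Fin b) (Fin b) ℝ :=
  Matrix.of fun j k =>
    if (k : ℕ) ≤ (j : ℕ) then binom (x + ((j : ℕ) - (k : ℕ)) - 1) ((j : ℕ) - (k : ℕ)) else 0

/-- The equivalence `Fin b × Fin (b^N) ≃ Fin (b^(N+1))`, `(p, r) ↦ p·b^N + r`, used to index
Kronecker products. -/
def pke (b N : ℕ) : Fin b × Fin (b ^ N) ≃ Fin (b ^ (N + 1)) :=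
  finProdFinEquiv.trans (finCongr (by ring))

open Kronecker in
/-- The generalized Sierpinski matrices `S_{b,N}(x)`, defined recursively by
`S_{b,N+1}(x) = S_{b,1}(x) ⊗ S_{b,N}(x)` (Kronecker product). -/
noncomputable def Smat (b : ℕ) (x : ℝ) : (N : ℕ) → Matrix (Fin (b ^ N)) (Fin (b ^ N)) ℝ
  | 0 => 1
  | N + 1 => Matrix.reindex (pke b N) (pke b N) (S1 b x ⊗ₖ Smat b x N)

-- auxiliary digit lemmas
lemma mod_pow_succ' (b m L : ℕ) : m % b ^ (L+1) = b ^ L * dig b m L + m % b ^ L := by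
  unfold dig
  conv_lhs => rw [← Nat.div_add_mod (m % b ^ (L+1)) (b ^ L)]
  rw [Nat.mod_mod_of_dvd _ (pow_dvd_pow b (Nat.le_succ L)), pow_succ,
    Nat.mod_mul_right_div_self]

lemma dom_le {b m n : ℕ} (hb : 2 ≤ b) (h : ∀ i, dig b m i ≤ dig b n i) : m ≤ n := by
  have hb' : 1 < b := hb
  have key : ∀ L, m % b ^ L ≤ n % b ^ L := by
    intro L
    induction L with
    | zero => simp [Nat.mod_one]
    | succ L ih =>
      rw [mod_pow_succ', mod_pow_succ']
      exact Nat.add_le_add (Nat.mul_le_mul_left _ (h L)) ih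
  have hn : n < b ^ (m + n) := lt_of_le_of_lt (Nat.le_add_left _ _) (Nat.lt_pow_self hb')
  have hm' : m < b ^ (m + n) := lt_of_le_of_lt (Nat.le_add_right _ _) (Nat.lt_pow_self hb')
  have := key (m + n)
  rwa [Nat.mod_eq_of_lt hm', Nat.mod_eq_of_lt hn] at this

lemma dig_high {b n N : ℕ} (hb : 2 ≤ b) (h : n < b ^ N) {i : ℕ} (hi : N ≤ i) : dig b n i = 0 := by
  unfold dig
  rw [Nat.div_eq_of_lt (lt_of_lt_of_le h (pow_le_pow_right₀ (by omega) hi))]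
  simp

lemma dig_low {b N p r i : ℕ} (hb : 2 ≤ b) (hi : i < N) :
    dig b (b ^ N * p + r) i = dig b r i := by
  unfold dig
  have e1 : b ^ N * p = b ^ i * (b * (b ^ (N - i - 1) * p)) := by
    rw [← mul_assoc, ← mul_assoc, ← pow_succ, ← pow_add]; congr 2; omega
  rw [e1, Nat.mul_add_div (by positivity), Nat.mul_add_mod]

lemma dig_top {b N p r : ℕ} (hp : p < b) (hr : r < b ^ N) :
    dig b (b ^ N * p + r) N = p := by
  unfold dig
  rw [Nat.mul_add_div (pow_pos (by omega) N), Nat.div_eq_of_lt hr, Nat.add_zero,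
    Nat.mod_eq_of_lt hp]

lemma split_lt {b N p r : ℕ} (hp : p < b) (hr : r < b ^ N) : b ^ N * p + r < b ^ (N + 1) := by
  have h1 : b ^ N * p + r < b ^ N * p + b ^ N := Nat.add_lt_add_left hr _
  have h2 : b ^ N * p + b ^ N = b ^ N * (p + 1) := by ring
  have h3 : b ^ N * (p + 1) ≤ b ^ N * b := Nat.mul_le_mul_left _ hp
  rw [pow_succ]
  omega

lemma dom_iff {b N jp kp jr kr : ℕ} (hb : 2 ≤ b) (hjp : jp < b) (hkp : kp < b)
    (hjr : jr < b ^ N) (hkr : kr < b ^ N) :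
    (∀ i, dig b (b ^ N * kp + kr) i ≤ dig b (b ^ N * jp + jr) i) ↔
      kp ≤ jp ∧ ∀ i, dig b kr i ≤ dig b jr i := by
  constructor
  · intro h
    refine ⟨?_, fun i => ?_⟩
    · have := h N
      rwa [dig_top hkp hkr, dig_top hjp hjr] at this
    · by_cases hi : i < N
      · have := h i
        rwa [dig_low hb hi, dig_low hb hi] at this
      · rw [dig_high hb hkr (by omega)]
        exact Nat.zero_le _
  · rintro ⟨h1, h2⟩ i
    rcases lt_trichotomy i N with hi | rfl | hi
    · rw [dig_low hb hi, dig_low hb hi]; exact h2 i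
    · rw [dig_top hkp hkr, dig_top hjp hjr]; exact h1
    · rw [dig_high hb (split_lt hkp hkr) (by omega : N + 1 ≤ i)]
      exact Nat.zero_le _

lemma pke_val (b N : ℕ) (p : Fin b) (r : Fin (b ^ N)) :
    ((pke b N (p, r) : Fin (b ^ (N+1))) : ℕ) = b ^ N * (p : ℕ) + (r : ℕ) := by
  simp [pke, finProdFinEquiv]
  ring

lemma smat_succ (b N : ℕ) (x : ℝ) (jp kp : Fin b) (jr kr : Fin (b ^ N)) :
    Smat b x (N + 1) (pke b N (jp, jr)) (pke b N (kp, kr)) =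
      S1 b x jp kp * Smat b x N jr kr := by
  simp [Smat, Matrix.reindex_apply, Matrix.kroneckerMap_apply]

open Classical in
lemma aux (b : ℕ) (hb : 2 ≤ b) (x : ℝ) : ∀ N (j k : Fin (b ^ N)),
    Smat b x N j k =
      if (k : ℕ) ≤ (j : ℕ) ∧ ∀ i, dig b k i ≤ dig b j i then
        ∏ i ∈ Finset.range N,
          binom (x + dig b ((j : ℕ) - (k : ℕ)) i - 1) (dig b ((j : ℕ) - (k : ℕ)) i)
      else 0
  | 0, j, k => by
    have hj : (j : ℕ) = 0 := by have := j.isLt; simpa using this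
    have hk : (k : ℕ) = 0 := by have := k.isLt; simpa using this
    have hjk : j = k := Fin.ext (by omega)
    rw [if_pos ⟨by omega, fun i => by rw [hj, hk]⟩]
    subst hjk
    simp [Smat, Matrix.one_apply_eq]
  | N + 1, j, k => by
    obtain ⟨⟨jp, jr⟩, rfl⟩ := (pke b N).surjective j
    obtain ⟨⟨kp, kr⟩, rfl⟩ := (pke b N).surjective k
    rw [smat_succ, aux b hb x N jr kr]
    simp only [pke_val]
    rw [dom_iff hb jp.isLt kp.isLt jr.isLt kr.isLt]
    by_cases h : (kp : ℕ) ≤ (jp : ℕ) ∧ ∀ i, dig b kr i ≤ dig b jr i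
    · have hkr : (kr : ℕ) ≤ (jr : ℕ) := dom_le hb h.2
      have hle : b ^ N * (kp : ℕ) + kr ≤ b ^ N * (jp : ℕ) + jr :=
        Nat.add_le_add (Nat.mul_le_mul_left _ h.1) hkr
      rw [if_pos ⟨hkr, h.2⟩, if_pos ⟨hle, h⟩, S1, Matrix.of_apply, if_pos h.1]
      -- difference decomposition
      obtain ⟨dp, hdp⟩ := Nat.exists_eq_add_of_le h.1
      obtain ⟨dr, hdr⟩ := Nat.exists_eq_add_of_le hkr
      have hsub : b ^ N * (jp : ℕ) + jr - (b ^ N * (kp : ℕ) + kr) = b ^ N * dp + dr := by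
        rw [hdp, hdr, Nat.mul_add]
        generalize b ^ N * (kp : ℕ) = A
        generalize b ^ N * dp = C
        omega
      have hsubp : (jp : ℕ) - (kp : ℕ) = dp := by omega
      have hsubr : (jr : ℕ) - (kr : ℕ) = dr := by omega
      have hdp' : dp < b := by have := jp.isLt; omega
      have hdr' : dr < b ^ N := by have := jr.isLt; omega
      rw [hsub, hsubp, hsubr, Finset.prod_range_succ, dig_top hdp' hdr']
      rw [mul_comm]
      congr 1
      · apply Finset.prod_congr rfl
        intro i hi
        rw [dig_low hb (Finset.mem_range.mp hi)]
      · congr 1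
        rw [hdp]
        push_cast
        ring
    · have hRHS : ¬ (b ^ N * (kp : ℕ) + (kr : ℕ) ≤ b ^ N * (jp : ℕ) + (jr : ℕ) ∧
          (kp : ℕ) ≤ (jp : ℕ) ∧ ∀ i, dig b kr i ≤ dig b jr i) := fun hc => h hc.2
      rw [if_neg hRHS]
      rcases Classical.em ((kp : ℕ) ≤ (jp : ℕ)) with hp | hp
      · have hr : ¬ ((kr : ℕ) ≤ (jr : ℕ) ∧ ∀ i, dig b kr i ≤ dig b jr i) := by
          intro hc; exact h ⟨hp, hc.2⟩
        rw [if_neg hr, mul_zero]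
      · rw [S1, Matrix.of_apply, if_neg hp, zero_mul]


open Classical in
/-- The `(j,k)`-entry of `S_{b,N}(x)` equals `∏_i binom(x + d_i - 1, d_i)` where the `d_i` are
the base-`b` digits of `j-k`, whenever `k ≤ j` and `k` is digitally dominated by `j` in base `b`;
and it equals `0` otherwise. -/
theorem sierpinski_entry_formula (b N : ℕ) (hb : 2 ≤ b) (hN : 1 ≤ N) (x : ℝ)
    (j k : Fin (b ^ N)) :
    Smat b x N j k =
      if (k : ℕ) ≤ (j : ℕ) ∧ ∀ i, dig b k i ≤ dig b j i then
        ∏ i ∈ Finset.range N,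
          binom (x + dig b ((j : ℕ) - (k : ℕ)) i - 1) (dig b ((j : ℕ) - (k : ℕ)) i)
      else 0 := by
  exact aux b hb x N j k
end

section
/- For all real numbers x and y and every natural number n: ∑_{k=0}^{n} binom(x+k, k) · binom(y+n-k, n-k) = binom(x+y+n+1, n). -/
lemma descPoch_smeval (x : ℝ) (k : ℕ) :
    Polynomial.smeval (descPochhammer ℤ k) x = ∏ i ∈ Finset.range k, (x - i) := by
  induction k with
  | zero => simp
  | succ k ih =>
    rw [descPochhammer_succ_right, Polynomial.smeval_mul, ih, Finset.prod_range_succ,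
      Polynomial.smeval_sub, Polynomial.smeval_X, Polynomial.smeval_natCast]
    simp

lemma binom_reflect (x : ℝ) (k : ℕ) :
    binom (x + k) k = (-1 : ℝ) ^ k * binom (-(x + 1)) k := by
  unfold binom
  have h1 : ∀ i ∈ Finset.range k, (x + k) - i = x + 1 + ((k - 1 - i : ℕ) : ℝ) := by
    intro i hi
    rw [Finset.mem_range] at hi
    rw [Nat.cast_sub (by omega), Nat.cast_sub (by omega)]
    push_cast
    ring
  have hL : ∏ i ∈ Finset.range k, (x + k - i) = ∏ i ∈ Finset.range k, (x + 1 + i) := by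
    rw [← Finset.prod_range_reflect (fun i => x + 1 + i) k]
    exact Finset.prod_congr rfl h1
  have h2 : ∀ i ∈ Finset.range k, -(x + 1) - i = (-1) * (x + 1 + i) := by intros; ring
  rw [hL, Finset.prod_congr rfl h2, Finset.prod_mul_distrib, Finset.prod_const,
    Finset.card_range]
  field_simp
  rw [← pow_mul, mul_comm k 2, pow_mul]
  norm_num

lemma binom_vandermonde (a b : ℝ) (n : ℕ) :
    ∑ k ∈ Finset.range (n + 1), binom a k * binom b (n - k) = binom (a + b) n := by
  simp only [binom_eq_choose]
  rw [Ring.add_choose_eq n (Commute.all a b),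
    ← Finset.Nat.sum_antidiagonal_eq_sum_range_succ (fun i j => Ring.choose a i * Ring.choose b j)]

/-- Gould's identity: `∑_{k=0}^{n} binom(x+k, k) · binom(y+n-k, n-k) = binom(x+y+n+1, n)`. -/
theorem gould_identity (x y : ℝ) (n : ℕ) :
    ∑ k ∈ Finset.range (n + 1), binom (x + k) k * binom (y + ((n - k : ℕ) : ℝ)) (n - k) =
      binom (x + y + n + 1) n := by
  have key : ∀ k ∈ Finset.range (n + 1),
      binom (x + k) k * binom (y + ((n - k : ℕ) : ℝ)) (n - k) =
      (-1 : ℝ) ^ n * (binom (-(x + 1)) k * binom (-(y + 1)) (n - k)) := by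
    intro k hk
    rw [Finset.mem_range] at hk
    rw [binom_reflect x k, binom_reflect y (n - k)]
    rw [show ((-1 : ℝ) ^ n) = (-1) ^ k * (-1) ^ (n - k) by
      rw [← pow_add]; congr 1; omega]
    ring
  rw [Finset.sum_congr rfl key, ← Finset.mul_sum, binom_vandermonde,
    show -(x + 1) + -(y + 1) = -((x + y + 1) + 1) by ring,
    show x + y + ↑n + 1 = (x + y + 1) + ↑n by ring,
    binom_reflect (x + y + 1) n]
end

section
/- Let b ≥ 2 be an integer, x a real number, and let X_{b,1}(x) be the b×b real matrix whose (j,k)-entry is x/(j-k) if j ≥ k+1 and 0 otherwise. Then for every integer n with 1 ≤ n ≤ b-1, the (j,k)-entry of the matrix power X_{b,1}(x)^n equals (n!/(j-k)!) · c(j-k, n) · x^n if j ≥ k+n, and 0 otherwise, where c(m,k) denotes the unsigned Stirling numbers of the first kind. -/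
/-- The unsigned Stirling numbers of the first kind `c(n,k)`, defined by
`x(x+1)⋯(x+n-1) = ∑_{k=0}^{n} c(n,k) x^k`. They satisfy `c(n+1,k+1) = c(n,k) + n·c(n,k+1)`. -/
def stirl : ℕ → ℕ → ℕ
  | 0, 0 => 1
  | 0, _ + 1 => 0
  | _ + 1, 0 => 0
  | n + 1, k + 1 => stirl n k + n * stirl n (k + 1)

/-- The matrix `X_{b,1}(x)`, with `(j,k)`-entry `x/(j-k)` if `j ≥ k+1` and `0` otherwise. -/
noncomputable def X1 (b : ℕ) (x : ℝ) : Matrix (Fin b) (Fin b) ℝ :=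
  Matrix.of fun j k =>
    if (k : ℕ) + 1 ≤ (j : ℕ) then x / (((j : ℕ) - (k : ℕ) : ℕ) : ℝ) else 0

lemma stirl_succ_succ (m n : ℕ) : stirl (m+1) (n+1) = stirl m n + m * stirl m (n+1) := rfl

lemma stirl_succ_zero (m : ℕ) : stirl (m+1) 0 = 0 := rfl

lemma stirl_zero_of_lt : ∀ m n : ℕ, m < n → stirl m n = 0
  | 0, 0, h => absurd h (lt_irrefl 0)
  | 0, _+1, _ => rfl
  | m+1, 0, h => (Nat.not_succ_le_zero _ h).elim
  | m+1, n+1, h => by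
      rw [stirl_succ_succ, stirl_zero_of_lt m n (by omega),
        stirl_zero_of_lt m (n+1) (by omega)]
      ring

lemma stirl_one : ∀ m : ℕ, stirl (m+1) 1 = m.factorial
  | 0 => rfl
  | m+1 => by
      rw [stirl_succ_succ, stirl_succ_zero, stirl_one m, Nat.factorial_succ]
      ring

lemma stirl_key : ∀ (m : ℕ) (n : ℕ), (n+1) * stirl m (n+1) =
    ∑ e ∈ Finset.range m, m.choose (e+1) * e.factorial * stirl (m-(e+1)) n := by
  intro m
  induction m with
  | zero => intro n; simp [stirl_zero_of_lt 0 (n+1) (by omega)]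
  | succ m ih =>
    intro n
    cases n with
    | zero =>
      rw [Finset.sum_range_succ, Finset.sum_eq_zero (fun e he => ?_)]
      · simp [stirl_one m, show stirl 0 0 = 1 from rfl]
      · have he' : e < m := Finset.mem_range.mp he
        have h1 : m + 1 - (e+1) = (m - (e+1)) + 1 := by omega
        rw [h1, stirl_succ_zero, mul_zero]
    | succ n =>
      have hterm : ∀ e ∈ Finset.range (m+1),
          (m+1).choose (e+1) * e.factorial * stirl (m+1-(e+1)) (n+1) =
          (m.choose e * e.factorial * stirl (m-e) (n+1)) +
          (m.choose (e+1) * e.factorial * stirl (m-e) (n+1)) := by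
        intro e he
        have h1 : m+1-(e+1) = m - e := by omega
        rw [h1, Nat.choose_succ_succ, add_mul, add_mul]
      rw [Finset.sum_congr rfl hterm, Finset.sum_add_distrib]
      rw [Finset.sum_range_succ' (fun e => m.choose e * e.factorial * stirl (m-e) (n+1)) m]
      rw [Finset.sum_range_succ (fun e => m.choose (e+1) * e.factorial * stirl (m-e) (n+1)) m]
      rw [Nat.choose_succ_self, zero_mul, zero_mul, add_zero]
      have hB : ∀ e ∈ Finset.range m,
          m.choose (e+1) * e.factorial * stirl (m-e) (n+1) =
          (m.choose (e+1) * e.factorial * stirl (m-(e+1)) n) +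
          ((m-(e+1)) * (m.choose (e+1) * e.factorial * stirl (m-(e+1)) (n+1))) := by
        intro e he
        have he' : e < m := Finset.mem_range.mp he
        have h1 : m - e = (m-(e+1)) + 1 := by omega
        rw [h1, stirl_succ_succ]
        ring
      rw [Finset.sum_congr rfl hB, Finset.sum_add_distrib, ← ih n]
      have hA : ∀ e ∈ Finset.range m,
          m.choose (e+1) * (e+1).factorial * stirl (m-(e+1)) (n+1) =
          (e+1) * (m.choose (e+1) * e.factorial * stirl (m-(e+1)) (n+1)) := by
        intro e he
        rw [Nat.factorial_succ]
        ring
      rw [Finset.sum_congr rfl hA]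
      have hcomb : (∑ e ∈ Finset.range m, (e+1) * (m.choose (e+1) * e.factorial * stirl (m-(e+1)) (n+1)))
          + (∑ e ∈ Finset.range m, (m-(e+1)) * (m.choose (e+1) * e.factorial * stirl (m-(e+1)) (n+1)))
          = m * ((n+1+1) * stirl m (n+1+1)) := by
        rw [← Finset.sum_add_distrib, ih (n+1), Finset.mul_sum]
        refine Finset.sum_congr rfl (fun e he => ?_)
        have he' : e < m := Finset.mem_range.mp he
        have h2 : (e+1) + (m-(e+1)) = m := by omega
        rw [← add_mul, h2]
      rw [stirl_succ_succ]
      simp only [Nat.choose_zero_right, Nat.factorial_zero, Nat.sub_zero, one_mul]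
      have hmul : (n+1+1) * (stirl m (n+1) + m * stirl m (n+1+1)) =
          stirl m (n+1) + (n+1) * stirl m (n+1) + m * ((n+1+1) * stirl m (n+1+1)) := by ring
      omega

lemma X1_apply (b : ℕ) (x : ℝ) (j k : Fin b) :
    X1 b x j k = if (k : ℕ) + 1 ≤ (j : ℕ) then x / (((j:ℕ) - (k:ℕ) : ℕ) : ℝ) else 0 := rfl

lemma X1_pow_aux (b : ℕ) (x : ℝ) : ∀ n : ℕ, 1 ≤ n → n ≤ b - 1 → ∀ j k : Fin b,
    (X1 b x ^ n) j k =
      if (k : ℕ) + n ≤ (j : ℕ) then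
        ((n.factorial : ℝ) / (((j : ℕ) - (k : ℕ)).factorial : ℝ)) *
          (stirl ((j : ℕ) - (k : ℕ)) n : ℝ) * x ^ n
      else 0 := by
  intro n hn
  induction n, hn using Nat.le_induction with
  | base =>
    intro _ j k
    rw [pow_one, X1_apply]
    by_cases h : (k:ℕ) + 1 ≤ (j:ℕ)
    · rw [if_pos h, if_pos h]
      set m := (j:ℕ) - (k:ℕ) with hm
      have hm1 : m = (m-1) + 1 := by omega
      have hs : stirl m 1 = (m-1).factorial := by rw [hm1]; exact stirl_one (m-1)
      have hfac : m.factorial = m * (m-1).factorial := by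
        conv_lhs => rw [hm1]
        rw [Nat.factorial_succ, ← hm1]
      have hm0 : (m : ℝ) ≠ 0 := by
        have h1 : 0 < m := by omega
        exact_mod_cast h1.ne'
      have hf0 : ((m-1).factorial : ℝ) ≠ 0 := Nat.cast_ne_zero.mpr (Nat.factorial_ne_zero _)
      have hfr : (m.factorial : ℝ) = (m : ℝ) * ((m-1).factorial : ℝ) := by
        exact_mod_cast hfac
      rw [hs, Nat.factorial_one, pow_one, hfr, Nat.cast_one]
      first
      | (field_simp; ring)
      | field_simp
    · rw [if_neg h, if_neg h]
  | succ n hn1 ih =>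
    intro hnb j k
    have IH := ih (by omega)
    rw [pow_succ, Matrix.mul_apply]
    set m := (j:ℕ) - (k:ℕ) with hm
    set f : ℕ → ℝ := fun l =>
      (if l + n ≤ (j:ℕ) then ((n.factorial : ℝ) / (((j:ℕ) - l).factorial : ℝ)) *
          (stirl ((j:ℕ) - l) n : ℝ) * x ^ n else 0) *
      (if (k:ℕ) + 1 ≤ l then x / ((l - (k:ℕ) : ℕ) : ℝ) else 0) with hfdef
    have hsum : (∑ l : Fin b, (X1 b x ^ n) j l * X1 b x l k) = ∑ l ∈ Finset.range b, f l := by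
      rw [← Fin.sum_univ_eq_sum_range f b]
      refine Finset.sum_congr rfl (fun l _ => ?_)
      rw [IH j l, X1_apply]
    rw [hsum]
    by_cases hjk : (k:ℕ) + (n+1) ≤ (j:ℕ)
    · rw [if_pos hjk]
      have hj : (j:ℕ) < b := j.isLt
      have hsub : Finset.Ico ((k:ℕ)+1) ((j:ℕ)+1-n) ⊆ Finset.range b := by
        intro l hl
        simp only [Finset.mem_Ico] at hl
        simp only [Finset.mem_range]
        omega
      have hzero : ∀ l ∈ Finset.range b, l ∉ Finset.Ico ((k:ℕ)+1) ((j:ℕ)+1-n) → f l = 0 := by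
        intro l _ hl
        simp only [Finset.mem_Ico, not_and_or, not_le, not_lt] at hl
        simp only [hfdef]
        split_ifs with h1 h2 <;> first | (exfalso; omega) | simp
      rw [← Finset.sum_subset hsub hzero]
      have hrange : (j:ℕ) + 1 - n - ((k:ℕ)+1) = m - n := by omega
      rw [Finset.sum_Ico_eq_sum_range, hrange]
      have hsub2 : Finset.range (m - n) ⊆ Finset.range m := by
        apply Finset.range_subset_range.mpr; omega
      have hzero2 : ∀ i ∈ Finset.range m, i ∉ Finset.range (m - n) → f ((k:ℕ)+1+i) = 0 := by
        intro i _ hi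
        simp only [Finset.mem_range, not_lt] at hi
        simp only [hfdef]
        split_ifs with h1 h2 <;> first | (exfalso; omega) | simp
      rw [Finset.sum_subset hsub2 hzero2]
      have hterm : ∀ e ∈ Finset.range m, f ((k:ℕ)+1+e) =
          ((n.factorial : ℝ) / (m.factorial : ℝ) * x^(n+1)) *
            ((m.choose (e+1) * e.factorial * stirl (m-(e+1)) n : ℕ) : ℝ) := by
        intro e he
        have he' : e < m := Finset.mem_range.mp he
        simp only [hfdef]
        by_cases h : e + 1 + n ≤ m
        · rw [if_pos (by omega), if_pos (by omega)]
          have h1 : (j:ℕ) - ((k:ℕ)+1+e) = m - (e+1) := by omega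
          have h2 : ((k:ℕ)+1+e) - (k:ℕ) = e+1 := by omega
          rw [h1, h2]
          have hd : e + 1 ≤ m := by omega
          have hcn : m.choose (e+1) * ((e+1) * e.factorial) * (m-(e+1)).factorial = m.factorial := by
            rw [← Nat.factorial_succ]; exact Nat.choose_mul_factorial_mul_factorial hd
          have hc : ((m.choose (e+1) : ℝ)) * (((e:ℝ)+1) * (e.factorial : ℝ)) *
              ((m-(e+1)).factorial : ℝ) = (m.factorial : ℝ) := by exact_mod_cast hcn
          have hne1 : ((m-(e+1)).factorial : ℝ) ≠ 0 := Nat.cast_ne_zero.mpr (Nat.factorial_ne_zero _)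
          have hne2 : ((m.factorial : ℝ)) ≠ 0 := Nat.cast_ne_zero.mpr (Nat.factorial_ne_zero _)
          have hne3 : ((e:ℝ)+1) ≠ 0 := by positivity
          have hne4 : ((m.choose (e+1) : ℕ) : ℝ) ≠ 0 := by
            have := Nat.choose_pos hd
            exact_mod_cast this.ne'
          have hne5 : ((e.factorial : ℕ) : ℝ) ≠ 0 := Nat.cast_ne_zero.mpr (Nat.factorial_ne_zero _)
          push_cast
          rw [← hc]
          first
          | (field_simp; ring)
          | field_simp
        · rw [if_neg (by omega), zero_mul, stirl_zero_of_lt (m-(e+1)) n (by omega)]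
          simp
      rw [Finset.sum_congr rfl hterm, ← Finset.mul_sum, ← Nat.cast_sum, ← stirl_key m n]
      rw [Nat.factorial_succ]
      push_cast
      ring
    · rw [if_neg hjk]
      refine Finset.sum_eq_zero fun l hl => ?_
      simp only [hfdef]
      split_ifs with h1 h2 <;> first | (exfalso; omega) | simp

/-- For `1 ≤ n ≤ b-1`, the `(j,k)`-entry of `X_{b,1}(x)^n` equals
`(n!/(j-k)!) · c(j-k, n) · x^n` if `j ≥ k+n`, and `0` otherwise. -/
theorem X1_pow_entry (b : ℕ) (hb : 2 ≤ b) (x : ℝ) (n : ℕ) (hn : 1 ≤ n) (hnb : n ≤ b - 1)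
    (j k : Fin b) :
    (X1 b x ^ n) j k =
      if (k : ℕ) + n ≤ (j : ℕ) then
        ((n.factorial : ℝ) / (((j : ℕ) - (k : ℕ)).factorial : ℝ)) *
          (stirl ((j : ℕ) - (k : ℕ)) n : ℝ) * x ^ n
      else 0 :=
  X1_pow_aux b x n hn hnb j k
end

section
/- Let b ≥ 2 be an integer and x a real number. Let X_{b,1}(x) be the b×b real matrix whose (j,k)-entry is x/(j-k) if j ≥ k+1 and 0 otherwise. Then the matrix exponential satisfies exp(X_{b,1}(x)) = S_{b,1}(x). -/
open Finset

noncomputable def c : ℕ → ℕ → ℝ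
  | 0, n => if n = 0 then 1 else 0
  | (i+1), n => ∑ m ∈ Finset.range n, c i m / ((n - m : ℕ) : ℝ)

example : (1:ℕ) = 1 := rfl

lemma c_zero (n : ℕ) : c 0 n = if n = 0 then 1 else 0 := by rw [c]

lemma c_eq_zero : ∀ i n, n < i → c i n = 0 := by
  intro i
  induction i with
  | zero => omega
  | succ i ih =>
    intro n hn
    rw [c]
    apply Finset.sum_eq_zero
    intro m hm
    simp only [mem_range] at hm
    rw [ih m (by omega)]
    simp

lemma triswap (F : ℕ → ℕ → ℝ) (n : ℕ) :
    ∑ m ∈ range n, ∑ l ∈ range m, F l m = ∑ l ∈ range n, ∑ m ∈ Finset.Ico (l+1) n, F l m := by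
  induction n with
  | zero => simp
  | succ n ih =>
    rw [Finset.sum_range_succ, ih, Finset.sum_range_succ]
    have h1 : ∀ l ∈ range n, ∑ m ∈ Finset.Ico (l+1) (n+1), F l m
        = (∑ m ∈ Finset.Ico (l+1) n, F l m) + F l n := by
      intro l hl
      simp only [mem_range] at hl
      rw [Finset.sum_Ico_succ_top (by omega)]
    rw [Finset.sum_congr rfl h1, Finset.sum_add_distrib]
    simp [add_comm]

lemma inner_reflect (l n : ℕ) (hl : l < n) :
    ∑ m ∈ Finset.Ico (l+1) n, (((n - m : ℕ):ℝ))⁻¹ = ∑ m ∈ Finset.Ico (l+1) n, (((m - l : ℕ):ℝ))⁻¹ := by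
  rw [Finset.sum_Ico_eq_sum_range, Finset.sum_Ico_eq_sum_range]
  have := Finset.sum_range_reflect (fun j => (((j + 1 : ℕ):ℝ))⁻¹) (n - (l+1))
  calc ∑ m ∈ range (n - (l+1)), (((n - (l+1+m) : ℕ):ℝ))⁻¹
      = ∑ j ∈ range (n - (l+1)), (fun j => (((j + 1 : ℕ):ℝ))⁻¹) (n - (l+1) - 1 - j) := by
        apply Finset.sum_congr rfl
        intro m hm
        simp only [mem_range] at hm
        congr 2
        omega
    _ = ∑ j ∈ range (n - (l+1)), (((j + 1 : ℕ):ℝ))⁻¹ := this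
    _ = ∑ m ∈ range (n - (l+1)), (((l+1+m - l : ℕ):ℝ))⁻¹ := by
        apply Finset.sum_congr rfl
        intro m hm
        congr 2
        omega

lemma lemD (i : ℕ) : ∀ n : ℕ, (n:ℝ) * c (i+1) n = (i+1) * ∑ m ∈ range n, c i m := by
  induction i with
  | zero =>
    intro n
    rcases Nat.eq_zero_or_pos n with h | h
    · subst h; simp
    · have h1 : c 1 n = ((n:ℕ):ℝ)⁻¹ := by
        rw [c]
        rw [Finset.sum_eq_single_of_mem 0 (by simp [h])]
        · rw [c_zero]
          simp [one_div]
        · intro m hm hm0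
          simp [c_zero, hm0]
      have h2 : ∑ m ∈ range n, c 0 m = 1 := by
        rw [Finset.sum_eq_single_of_mem 0 (by simp [h])]
        · simp [c_zero]
        · intro m hm hm0; simp [c_zero, hm0]
      rw [h1, h2]
      have : (n:ℝ) ≠ 0 := Nat.cast_ne_zero.mpr (by omega)
      field_simp
      norm_num
  | succ i ih =>
    intro n
    have expand : (n:ℝ) * c (i+1+1) n
        = (∑ m ∈ range n, c (i+1) m) + ∑ m ∈ range n, ((m:ℝ) * c (i+1) m) / ((n - m : ℕ):ℝ) := by
      rw [c, Finset.mul_sum, ← Finset.sum_add_distrib]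
      apply Finset.sum_congr rfl
      intro m hm
      simp only [mem_range] at hm
      have hnm : (((n - m : ℕ)):ℝ) ≠ 0 := Nat.cast_ne_zero.mpr (by omega)
      have hcast : (n:ℝ) = ((n - m : ℕ):ℝ) + (m:ℝ) := by
        push_cast [Nat.cast_sub hm.le]; ring
      rw [hcast]
      field_simp
    rw [expand]
    have key : ∑ m ∈ range n, ((m:ℝ) * c (i+1) m) / ((n - m : ℕ):ℝ)
        = ((i:ℝ)+1) * ∑ m ∈ range n, c (i+1) m := by
      calc ∑ m ∈ range n, ((m:ℝ) * c (i+1) m) / ((n - m : ℕ):ℝ)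
          = ∑ m ∈ range n, ((i:ℝ)+1) * ∑ l ∈ range m, c i l * (((n - m : ℕ):ℝ))⁻¹ := by
            apply Finset.sum_congr rfl
            intro m hm
            rw [div_eq_mul_inv, ih m]
            push_cast
            rw [Finset.mul_sum, Finset.sum_mul, Finset.mul_sum]
            exact Finset.sum_congr rfl fun l _ => by ring
        _ = ((i:ℝ)+1) * ∑ m ∈ range n, ∑ l ∈ range m, c i l * (((n - m : ℕ):ℝ))⁻¹ := by
            rw [Finset.mul_sum]
        _ = ((i:ℝ)+1) * ∑ l ∈ range n, ∑ m ∈ Finset.Ico (l+1) n, c i l * (((n - m : ℕ):ℝ))⁻¹ := by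
            rw [triswap]
        _ = ((i:ℝ)+1) * ∑ l ∈ range n, ∑ m ∈ Finset.Ico (l+1) n, c i l * (((m - l : ℕ):ℝ))⁻¹ := by
            congr 1
            apply Finset.sum_congr rfl
            intro l hl
            simp only [mem_range] at hl
            rw [← Finset.mul_sum, ← Finset.mul_sum, inner_reflect l n hl]
        _ = ((i:ℝ)+1) * ∑ m ∈ range n, ∑ l ∈ range m, c i l * (((m - l : ℕ):ℝ))⁻¹ := by
            rw [triswap]
        _ = ((i:ℝ)+1) * ∑ m ∈ range n, c (i+1) m := by
            congr 1
            all_goals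
              refine Finset.sum_congr rfl fun m hm => ?_
              rw [c]
              exact Finset.sum_congr rfl fun l _ => (div_eq_mul_inv _ _).symm
    rw [key]
    push_cast
    try ring

lemma binom_zero (x : ℝ) : binom x 0 = 1 := by simp [binom]

lemma r_succ (x : ℝ) (n : ℕ) :
    ((n:ℝ)+1) * binom (x + (n+1:ℕ) - 1) (n+1) = (x + n) * binom (x + n - 1) n := by
  unfold binom
  have hnum : ∏ i ∈ range (n+1), (x + ((n+1:ℕ):ℝ) - 1 - i)
      = (∏ i ∈ range n, (x + (n:ℝ) - 1 - i)) * (x + n) := by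
    rw [Finset.prod_range_succ' (fun i => (x + ((n+1:ℕ):ℝ) - 1 - i))]
    congr 1
    · apply Finset.prod_congr rfl; intro i _; push_cast; ring
    · push_cast; ring
  rw [hnum]
  rw [Nat.factorial_succ]
  push_cast
  have h : ((n:ℝ)+1) ≠ 0 := by positivity
  have h2 : ((n+1) * Nat.factorial n : ℝ) ≠ 0 := by positivity
  field_simp

lemma r_rec (x : ℝ) (n : ℕ) :
    (n:ℝ) * binom (x + n - 1) n = x * ∑ m ∈ range n, binom (x + m - 1) m := by
  induction n with
  | zero => simp
  | succ n ih =>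
    rw [Finset.sum_range_succ, mul_add, ← ih]
    have := r_succ x n
    push_cast at this ⊢
    linarith [this]

noncomputable def E (x : ℝ) (n : ℕ) : ℝ :=
  ∑ i ∈ range (n+1), x^i * c i n / (Nat.factorial i)

lemma E_trim (x : ℝ) (m N : ℕ) (h : m < N) :
    ∑ i ∈ range N, x^i * c i m / (Nat.factorial i) = E x m := by
  unfold E
  symm
  apply Finset.sum_subset
  · intro i hi; simp only [mem_range] at *; omega
  · intro i _ hi
    simp only [mem_range, not_lt] at hi
    rw [c_eq_zero i m (by omega)]
    simp

lemma E_rec (x : ℝ) (n : ℕ) (hn : 1 ≤ n) :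
    (n:ℝ) * E x n = x * ∑ m ∈ range n, E x m := by
  unfold E
  rw [Finset.mul_sum]
  have peel : ∑ i ∈ range (n+1), (n:ℝ) * (x^i * c i n / (Nat.factorial i))
      = (∑ i ∈ range n, (n:ℝ) * (x^(i+1) * c (i+1) n / (Nat.factorial (i+1))))
        + (n:ℝ) * (x^0 * c 0 n / (Nat.factorial 0)) := by
    exact Finset.sum_range_succ' _ n
  rw [peel]
  have hc0 : c 0 n = 0 := by rw [c_zero]; simp; omega
  rw [hc0]
  simp only [mul_zero, zero_mul, zero_div, mul_zero, add_zero]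
  have term : ∀ i, (n:ℝ) * (x^(i+1) * c (i+1) n / (Nat.factorial (i+1)))
      = x * ∑ m ∈ range n, x^i * c i m / (Nat.factorial i) := by
    intro i
    have hD := lemD i n
    have hfac : ((Nat.factorial (i+1)):ℝ) = ((i:ℝ)+1) * (Nat.factorial i) := by
      rw [Nat.factorial_succ]; push_cast; ring
    have hne : ((i:ℝ)+1) ≠ 0 := by positivity
    have hfne : ((Nat.factorial i):ℝ) ≠ 0 := by positivity
    calc (n:ℝ) * (x^(i+1) * c (i+1) n / (Nat.factorial (i+1)))
        = x^(i+1) * ((n:ℝ) * c (i+1) n) / (Nat.factorial (i+1)) := by ring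
      _ = x^(i+1) * (((i:ℝ)+1) * ∑ m ∈ range n, c i m) / (((i:ℝ)+1) * (Nat.factorial i)) := by
          rw [hD, hfac]
      _ = x^(i+1) * (∑ m ∈ range n, c i m) / (Nat.factorial i) := by
          rw [mul_div_assoc, mul_div_mul_left _ _ hne, ← mul_div_assoc]
      _ = x * ∑ m ∈ range n, x^i * c i m / (Nat.factorial i) := by
          rw [Finset.mul_sum, Finset.sum_div, Finset.mul_sum]
          apply Finset.sum_congr rfl
          intro m hm
          rw [pow_succ]
          ring
  calc ∑ i ∈ range n, (n:ℝ) * (x^(i+1) * c (i+1) n / (Nat.factorial (i+1)))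
      = ∑ i ∈ range n, x * ∑ m ∈ range n, x^i * c i m / (Nat.factorial i) := by
        exact Finset.sum_congr rfl fun i _ => term i
    _ = x * ∑ m ∈ range n, ∑ i ∈ range n, x^i * c i m / (Nat.factorial i) := by
        rw [← Finset.mul_sum, Finset.sum_comm]
    _ = x * ∑ m ∈ range n, ∑ i ∈ range (m+1), x^i * c i m / (Nat.factorial i) := by
        congr 1
        apply Finset.sum_congr rfl
        intro m hm
        simp only [mem_range] at hm
        rw [E_trim x m n hm]
        rfl

lemma E_eq_binom (x : ℝ) (n : ℕ) : E x n = binom (x + n - 1) n := by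
  induction n using Nat.strong_induction_on with
  | _ n ih =>
    rcases Nat.eq_zero_or_pos n with h | h
    · subst h
      simp [E, binom_zero, c_zero]
    · have hne : (n:ℝ) ≠ 0 := Nat.cast_ne_zero.mpr (by omega)
      have h1 := E_rec x n h
      have h2 := r_rec x n
      have h3 : ∑ m ∈ range n, E x m = ∑ m ∈ range n, binom (x + m - 1) m := by
        apply Finset.sum_congr rfl
        intro m hm
        simp only [mem_range] at hm
        exact ih m hm
      have : (n:ℝ) * E x n = (n:ℝ) * binom (x + n - 1) n := by
        rw [h1, h3, ← h2]
      exact mul_left_cancel₀ hne this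

lemma X1_smul (b : ℕ) (x : ℝ) : X1 b x = x • X1 b 1 := by
  ext j k
  simp only [X1, Matrix.smul_apply, Matrix.of_apply, smul_eq_mul, mul_ite, mul_zero]
  split_ifs with h
  · rw [mul_one_div]
  · rfl

lemma powN (b : ℕ) : ∀ i : ℕ, ∀ j k : Fin b,
    ((X1 b 1) ^ i) j k = if (k:ℕ) ≤ (j:ℕ) then c i ((j:ℕ) - (k:ℕ)) else 0 := by
  intro i
  induction i with
  | zero =>
    intro j k
    rw [pow_zero, Matrix.one_apply]
    rw [c_zero]
    by_cases h : j = k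
    · subst h; simp
    · have h2 : ¬ ((j:ℕ) = (k:ℕ)) := fun hh => h (Fin.ext hh)
      rw [if_neg h]
      split_ifs with h3 h4
      · omega
      · rfl
      · rfl
  | succ i ih =>
    intro j k
    rw [pow_succ', Matrix.mul_apply]
    set G : ℕ → ℝ := fun l =>
      (if l + 1 ≤ (j:ℕ) then 1 / (((j:ℕ) - l : ℕ):ℝ) else 0) *
      (if (k:ℕ) ≤ l then c i (l - (k:ℕ)) else 0) with hG
    have hterm : ∀ l : Fin b, (X1 b 1) j l * ((X1 b 1)^i) l k = G (l:ℕ) := by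
      intro l
      rw [ih l k, hG]
      rfl
    rw [Finset.sum_congr rfl (fun l _ => hterm l)]
    rw [Fin.sum_univ_eq_sum_range G b]
    by_cases hkj : (k:ℕ) ≤ (j:ℕ)
    · rw [if_pos hkj]
      have hsub : Finset.Ico (k:ℕ) (j:ℕ) ⊆ range b := by
        intro l hl
        simp only [Finset.mem_Ico, mem_range] at *
        omega
      have hzero : ∀ l ∈ range b, l ∉ Finset.Ico (k:ℕ) (j:ℕ) → G l = 0 := by
        intro l _ hl
        simp only [Finset.mem_Ico, not_and, not_lt] at hl
        rw [hG]
        simp only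
        by_cases h1 : (k:ℕ) ≤ l
        · rw [if_neg (by specialize hl h1; omega)]
          ring
        · rw [if_neg h1, mul_zero]
      rw [← Finset.sum_subset hsub hzero]
      rw [Finset.sum_Ico_eq_sum_range]
      rw [c]
      apply Finset.sum_congr rfl
      intro m hm
      simp only [mem_range] at hm
      rw [hG]
      simp only
      rw [if_pos (by omega), if_pos (by omega)]
      have e1 : (k:ℕ) + m - (k:ℕ) = m := by omega
      have e2 : ((j:ℕ) - ((k:ℕ) + m) : ℕ) = ((j:ℕ) - (k:ℕ)) - m := by omega
      rw [e1, e2, one_div, div_eq_mul_inv, mul_comm]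
    · rw [if_neg hkj]
      apply Finset.sum_eq_zero
      intro l _
      rw [hG]
      simp only
      by_cases h1 : l + 1 ≤ (j:ℕ)
      · rw [if_neg (show ¬((k:ℕ) ≤ l) by omega), mul_zero]
      · rw [if_neg h1, zero_mul]

lemma X1_pow_b (b : ℕ) (x : ℝ) : (X1 b x) ^ b = 0 := by
  rw [X1_smul, smul_pow]
  have : (X1 b 1) ^ b = 0 := by
    ext j k
    rw [powN b b j k]
    split_ifs with h
    · rw [c_eq_zero b _ (by omega)]
      rfl
    · rfl
  rw [this, smul_zero]

/-- The matrix exponential of `X_{b,1}(x)` is `S_{b,1}(x)`. -/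
theorem exp_X1_eq_S1 (b : ℕ) (hb : 2 ≤ b) (x : ℝ) :
    NormedSpace.exp (X1 b x) = S1 b x := by
  rw [NormedSpace.exp_eq_tsum ℝ]
  have hz : ∀ n ∉ range b, ((Nat.factorial n : ℝ)⁻¹) • (X1 b x) ^ n = 0 := by
    intro n hn
    simp only [mem_range, not_lt] at hn
    rw [pow_eq_zero_of_le hn (X1_pow_b b x), smul_zero]
  simp only
  rw [tsum_eq_sum hz]
  ext j k
  rw [Matrix.sum_apply]
  have hterm : ∀ n ∈ range b, (((Nat.factorial n : ℝ))⁻¹ • (X1 b x) ^ n) j k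
      = (if (k:ℕ) ≤ (j:ℕ) then x ^ n * c n ((j:ℕ) - (k:ℕ)) / (Nat.factorial n) else 0) := by
    intro n _
    rw [Matrix.smul_apply, X1_smul, smul_pow, Matrix.smul_apply, powN b n j k]
    simp only [smul_eq_mul]
    split_ifs with h
    · rw [div_eq_mul_inv]; ring
    · simp
  rw [Finset.sum_congr rfl hterm]
  by_cases h : (k:ℕ) ≤ (j:ℕ)
  · simp only [if_pos h]
    have hd : (j:ℕ) - (k:ℕ) < b := by omega
    have trim := E_trim x ((j:ℕ) - (k:ℕ)) b hd
    have : ∑ n ∈ range b, x ^ n * c n ((j:ℕ) - (k:ℕ)) / (Nat.factorial n)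
        = binom (x + ((j:ℕ) - (k:ℕ)) - 1) ((j:ℕ) - (k:ℕ)) := by
      rw [trim, E_eq_binom, Nat.cast_sub h]
    rw [this]
    simp only [S1, Matrix.of_apply, if_pos h]
  · simp only [if_neg h]
    rw [Finset.sum_const_zero]
    simp only [S1, Matrix.of_apply, if_neg h]
end

section
/- Let b ≥ 2 and N ≥ 1 be integers and x a real number. Then the matrix exponential satisfies exp(X_{b,N}(x)) = S_{b,N}(x). -/
open Kronecker in
/-- The matrices `X_{b,N}(x)`, defined recursively by the Kronecker sum
`X_{b,N+1}(x) = X_{b,1}(x) ⊗ I_{b^N} + I_b ⊗ X_{b,N}(x)`. -/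
noncomputable def Xmat (b : ℕ) (x : ℝ) : (N : ℕ) → Matrix (Fin (b ^ N)) (Fin (b ^ N)) ℝ
  | 0 => 0
  | N + 1 =>
      Matrix.reindex (pke b N) (pke b N)
        (X1 b x ⊗ₖ (1 : Matrix (Fin (b ^ N)) (Fin (b ^ N)) ℝ) +
          (1 : Matrix (Fin b) (Fin b) ℝ) ⊗ₖ Xmat b x N)

noncomputable def Pm (m : ℕ) (x : ℝ) : ℝ :=
  (∏ i ∈ Finset.range m, (x + i)) / (Nat.factorial m)
lemma binom_eq_Pm (m : ℕ) (x : ℝ) : binom (x + m - 1) m = Pm m x := by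
  unfold binom Pm
  congr 1
  rw [← Finset.prod_range_reflect (fun i => x + (i:ℝ)) m]
  refine Finset.prod_congr rfl fun j hj => ?_
  rw [Finset.mem_range] at hj
  have h1 : (1:ℕ) ≤ m := by omega
  have h2 : j ≤ m - 1 := by omega
  rw [Nat.cast_sub h2, Nat.cast_sub h1, Nat.cast_one]
  ring
lemma S1_apply (b : ℕ) (x : ℝ) (j k : Fin b) :
    S1 b x j k = if (k : ℕ) ≤ (j : ℕ) then Pm ((j : ℕ) - (k : ℕ)) x else 0 := by
  unfold S1
  simp only [Matrix.of_apply]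
  split_ifs with h
  · have hc : ((j:ℕ):ℝ) - ((k:ℕ):ℝ) = (((j:ℕ) - (k:ℕ) : ℕ):ℝ) := by
      rw [Nat.cast_sub h]
    rw [show x + (((j:ℕ):ℝ) - ((k:ℕ):ℝ)) - 1 = x + ((((j:ℕ)-(k:ℕ) : ℕ)):ℝ) - 1 by rw [hc]]
    exact binom_eq_Pm _ x
  · rfl
lemma sum_smul_std (b : ℕ) (c : Fin b → Fin b → ℝ) :
    (∑ p : Fin b × Fin b, c p.1 p.2 • Matrix.single p.1 p.2 (1:ℝ))
      = Matrix.of c := by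
  ext j k
  rw [Matrix.sum_apply]
  rw [Fintype.sum_prod_type]
  simp [Matrix.single, ite_and, Finset.sum_ite_eq', Finset.sum_ite_eq]
/-- The derivative entries. -/
noncomputable def S1d (b : ℕ) (x : ℝ) : Matrix (Fin b) (Fin b) ℝ :=
  Matrix.of fun j k =>
    if (k : ℕ) ≤ (j : ℕ) then
      ∑ i ∈ Finset.range ((j : ℕ) - (k : ℕ)),
        (1 / (i + 1 : ℝ)) * Pm ((j : ℕ) - (k : ℕ) - 1 - i) x
    else 0
lemma X1_one_mul_S1 (b : ℕ) (x : ℝ) : X1 b 1 * S1 b x = S1d b x := by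
  ext j k
  rw [Matrix.mul_apply]
  have hterm : ∀ l : Fin b, X1 b 1 j l * S1 b x l k
      = (fun l : ℕ => (if l + 1 ≤ (j:ℕ) then 1 / (((j:ℕ) - l : ℕ) : ℝ) else 0)
          * (if (k:ℕ) ≤ l then Pm (l - (k:ℕ)) x else 0)) (l : ℕ) := by
    intro l
    rw [S1_apply]
    simp [X1]
  rw [Finset.sum_congr rfl fun l _ => hterm l,
    Fin.sum_univ_eq_sum_range (fun l : ℕ => (if l + 1 ≤ (j:ℕ) then 1 / (((j:ℕ) - l : ℕ) : ℝ) else 0)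
          * (if (k:ℕ) ≤ l then Pm (l - (k:ℕ)) x else 0)) b]
  set H : ℕ → ℝ := fun l => (if l + 1 ≤ (j:ℕ) then 1 / (((j:ℕ) - l : ℕ) : ℝ) else 0)
          * (if (k:ℕ) ≤ l then Pm (l - (k:ℕ)) x else 0) with hH
  by_cases hkj : (k:ℕ) ≤ (j:ℕ)
  · -- restrict to Ico k j
    have hsub : Finset.Ico (k:ℕ) (j:ℕ) ⊆ Finset.range b := by
      intro l hl
      rw [Finset.mem_Ico] at hl
      rw [Finset.mem_range]
      exact lt_of_lt_of_le hl.2 (le_of_lt j.isLt)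
    have hzero : ∀ l ∈ Finset.range b, l ∉ Finset.Ico (k:ℕ) (j:ℕ) → H l = 0 := by
      intro l _ hl
      rw [Finset.mem_Ico, not_and_or, not_le, not_lt] at hl
      rcases hl with hl | hl
      · simp [hH, if_neg (by omega : ¬ (k:ℕ) ≤ l)]
      · simp [hH, if_neg (by omega : ¬ l + 1 ≤ (j:ℕ))]
        exact fun _ h => absurd h (by omega)
    rw [← Finset.sum_subset hsub hzero, Finset.sum_Ico_eq_sum_range]
    have hstep : ∀ i ∈ Finset.range ((j:ℕ) - (k:ℕ)),
        H ((k:ℕ) + i) = 1 / ((((j:ℕ) - (k:ℕ) - i : ℕ)) : ℝ) * Pm i x := by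
      intro i hi
      rw [Finset.mem_range] at hi
      have h1 : (k:ℕ) + i + 1 ≤ (j:ℕ) := by omega
      have h2 : (k:ℕ) ≤ (k:ℕ) + i := by omega
      simp only [hH, if_pos h1, if_pos h2]
      rw [show (j:ℕ) - ((k:ℕ) + i) = (j:ℕ) - (k:ℕ) - i from by omega,
        show (k:ℕ) + i - (k:ℕ) = i from by omega]
    rw [Finset.sum_congr rfl hstep]
    -- compare with S1d via reflection
    rw [S1d, Matrix.of_apply, if_pos hkj]
    set m := (j:ℕ) - (k:ℕ) with hm
    rw [show (∑ i ∈ Finset.range m, (1 / (i + 1 : ℝ)) * Pm (m - 1 - i) x)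
        = ∑ i ∈ Finset.range m, (fun i => 1 / (((m - i : ℕ)) : ℝ) * Pm i x) (m - 1 - i)
      from Finset.sum_congr rfl fun i hi => by
        rw [Finset.mem_range] at hi
        simp only []
        congr 2
        · rw [show m - (m - 1 - i) = i + 1 from by omega]
          push_cast
          ring]
    rw [Finset.sum_range_reflect (fun i => 1 / (((m - i : ℕ)) : ℝ) * Pm i x) m]
  · -- j < k : both sides zero
    rw [S1d, Matrix.of_apply, if_neg hkj]
    refine Finset.sum_eq_zero fun l _ => ?_
    by_cases h1 : l + 1 ≤ (j:ℕ)
    · simp [hH, if_neg (by omega : ¬ (k:ℕ) ≤ l)]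
    · simp [hH, if_neg h1]
      exact fun _ h => absurd h (by omega)
lemma Pm_zero (x : ℝ) : Pm 0 x = 1 := by simp [Pm]
lemma Pm_succ (m : ℕ) (x : ℝ) : Pm (m + 1) x = Pm m x * (x + m) / (m + 1) := by
  simp only [Pm, Finset.prod_range_succ, Nat.factorial_succ]
  push_cast
  rw [div_mul_eq_mul_div, div_div, mul_comm (Nat.factorial m : ℝ) ((m:ℝ)+1)]
lemma hasDerivAt_Pm (m : ℕ) (x : ℝ) :
    HasDerivAt (Pm m) (∑ i ∈ Finset.range m, (1 / (i + 1 : ℝ)) * Pm (m - 1 - i) x) x := by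
  induction m generalizing x with
  | zero =>
      simp only [Finset.range_zero, Finset.sum_empty]
      have h : (Pm 0) = fun _ : ℝ => (1:ℝ) := by funext y; simp [Pm]
      rw [h]
      exact hasDerivAt_const x 1
  | succ m ih =>
      have hfun : Pm (m+1) = fun y => Pm m y * (y + m) / (m + 1) := by
        funext y; rw [Pm_succ]
      rw [hfun]
      have hd : HasDerivAt (fun y => Pm m y * (y + m) / (m + 1))
          (((∑ i ∈ Finset.range m, (1 / (i + 1 : ℝ)) * Pm (m - 1 - i) x) * (x + m)
            + Pm m x * 1) / (m + 1)) x :=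
        ((ih x).mul ((hasDerivAt_id x).add_const (m:ℝ))).div_const _
      convert hd using 1
      have hm1 : ((m:ℝ) + 1) ≠ 0 := by positivity
      rw [eq_div_iff hm1, Finset.sum_mul, Finset.sum_mul]
      have key : ∀ i ∈ Finset.range m,
          (1 / (i + 1 : ℝ)) * Pm (m - 1 - i) x * (x + m)
            = ((m - i : ℕ) : ℝ) / (i + 1) * Pm (m - i) x + Pm (m - 1 - i) x := by
        intro i hi
        rw [Finset.mem_range] at hi
        set k := m - 1 - i with hk
        have hmk : m - i = k + 1 := by omega
        have hki : (k : ℝ) + (i + 1) = m := by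
          have : k + (i+1) = m := by omega
          exact_mod_cast congrArg (Nat.cast : ℕ → ℝ) this
        have hPm : ((k:ℝ) + 1) * Pm (k+1) x = Pm k x * (x + k) := by
          rw [Pm_succ]; field_simp
        have hxm : (x + (m:ℝ)) = (x + k) + (i + 1) := by linarith
        rw [hmk, hxm]
        have hip : ((i:ℝ) + 1) ≠ 0 := by positivity
        push_cast
        field_simp
        nlinarith [hPm]
      rw [Finset.sum_congr rfl key, Finset.sum_add_distrib]
      -- now goal: Σ_{range (m+1)} (1/(i+1)) * Pm (m+1-1-i) x * (m+1)
      --   = Σ_{range m} (m-i)/(i+1) Pm(m-i) + Σ_{range m} Pm(m-1-i) + Pm m x * 1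
      have e1 : ∀ i, m + 1 - 1 - i = m - i := fun i => by omega
      have lhs_eq : ∀ i ∈ Finset.range (m+1),
          (1 / (i + 1 : ℝ)) * Pm (m + 1 - 1 - i) x * ((m:ℝ) + 1)
            = ((m - i : ℕ) : ℝ) / (i + 1) * Pm (m - i) x + Pm (m - i) x := by
        intro i hi
        rw [Finset.mem_range] at hi
        rw [e1 i]
        have hle : ((m - i : ℕ) : ℝ) = (m : ℝ) - i := by
          have : i ≤ m := by omega
          push_cast [this]; ring
        have hip : ((i:ℝ) + 1) ≠ 0 := by positivity
        rw [hle]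
        field_simp
        ring
      rw [Finset.sum_congr rfl lhs_eq, Finset.sum_add_distrib]
      have hA : ∑ i ∈ Finset.range (m+1), ((m - i : ℕ) : ℝ) / (i + 1) * Pm (m - i) x
          = ∑ i ∈ Finset.range m, ((m - i : ℕ) : ℝ) / (i + 1) * Pm (m - i) x := by
        rw [Finset.sum_range_succ]; simp
      have hB : ∑ i ∈ Finset.range (m+1), Pm (m - i) x
          = ∑ i ∈ Finset.range m, Pm (m - 1 - i) x + Pm m x := by
        rw [Finset.sum_range_succ']
        simp only [Nat.sub_zero]
        congr 1
        refine Finset.sum_congr rfl fun i _ => ?_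
        congr 1
        omega
      rw [hA, hB]
      ring
lemma sum_smul_std_apply (b : ℕ) (c : Fin b × Fin b → ℝ) (j k : Fin b) :
    (∑ p : Fin b × Fin b, c p • Matrix.single p.1 p.2 (1:ℝ)) j k = c (j, k) := by
  rw [Matrix.sum_apply, Fintype.sum_prod_type]
  simp [Matrix.single, ite_and, smul_eq_mul, mul_ite, mul_one, mul_zero,
    Finset.sum_ite_eq', Finset.sum_ite_eq]
lemma one_matrix_eq (b : ℕ) : S1 b 0 = (1 : Matrix (Fin b) (Fin b) ℝ) := by
  ext j k
  rw [S1_apply, Matrix.one_apply]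
  by_cases h : j = k
  · subst h
    simp [Pm]
  · have hne : (j:ℕ) ≠ (k:ℕ) := fun hc => h (Fin.ext hc)
    by_cases h2 : (k:ℕ) ≤ (j:ℕ)
    · have hm : 0 ∈ Finset.range ((j:ℕ) - (k:ℕ)) := Finset.mem_range.2 (by omega)
      rw [if_pos h2, if_neg h]
      unfold Pm
      rw [Finset.prod_eq_zero hm (by simp)]
      simp
    · rw [if_neg h2, if_neg h]
section Norms
attribute [local instance] Matrix.linftyOpSemiNormedRing Matrix.linftyOpNormedRing
  Matrix.linftyOpNormedAlgebra
open NormedSpace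
lemma hasDerivAt_S1 (b : ℕ) (x : ℝ) :
    HasDerivAt (fun y => S1 b y) (S1d b x) x := by
  have hdec : (fun y => S1 b y)
      = fun y => ∑ p : Fin b × Fin b,
          (if ((p.2:ℕ) ≤ (p.1:ℕ)) then Pm ((p.1:ℕ) - (p.2:ℕ)) y else 0)
            • Matrix.single p.1 p.2 (1:ℝ) := by
    funext y
    ext j k
    rw [sum_smul_std_apply b
      (fun p => if ((p.2:ℕ) ≤ (p.1:ℕ)) then Pm ((p.1:ℕ) - (p.2:ℕ)) y else 0) j k,
      S1_apply]
  have hS1d : S1d b x = ∑ p : Fin b × Fin b,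
      (if ((p.2:ℕ) ≤ (p.1:ℕ)) then
        ∑ i ∈ Finset.range ((p.1:ℕ) - (p.2:ℕ)),
          (1 / (i + 1 : ℝ)) * Pm ((p.1:ℕ) - (p.2:ℕ) - 1 - i) x
      else 0) • Matrix.single p.1 p.2 (1:ℝ) := by
    ext j k
    rw [sum_smul_std_apply]
    rfl
  rw [hdec, hS1d]
  refine HasDerivAt.fun_sum fun p _ => HasDerivAt.smul_const (𝕜 := ℝ) (𝕜' := ℝ) (F := Matrix (Fin b) (Fin b) ℝ) ?_ _
  by_cases h : ((p.2:ℕ) ≤ (p.1:ℕ))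
  · simp only [if_pos h]
    exact hasDerivAt_Pm _ x
  · simp only [if_neg h]
    exact hasDerivAt_const x 0
end Norms
theorem exp_X1_eq (b : ℕ) (x : ℝ) : NormedSpace.exp (X1 b x) = S1 b x := by
  letI : SeminormedRing (Matrix (Fin b) (Fin b) ℝ) := Matrix.linftyOpSemiNormedRing
  letI : NormedRing (Matrix (Fin b) (Fin b) ℝ) := Matrix.linftyOpNormedRing
  letI : NormedAlgebra ℝ (Matrix (Fin b) (Fin b) ℝ) := Matrix.linftyOpNormedAlgebra
  set T := X1 b 1 with hT
  have hX : X1 b x = x • T := by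
    ext j k
    simp only [hT, X1, Matrix.of_apply, Matrix.smul_apply]
    split_ifs with h
    · rw [smul_eq_mul, mul_one_div]
    · simp
  have hg : ∀ y : ℝ, HasDerivAt
      (fun y : ℝ => NormedSpace.exp ((-y) • T) * S1 b y) 0 y := by
    intro y
    have hinner : HasDerivAt (fun y : ℝ => -y) (-1) y := (hasDerivAt_id y).neg
    have h1 : HasDerivAt (fun y : ℝ => NormedSpace.exp ((-y) • T))
        ((-1 : ℝ) • (T * NormedSpace.exp ((-y) • T))) y :=
      (hasDerivAt_exp_smul_const' T (-y)).scomp y hinner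
    have hmul := h1.mul (hasDerivAt_S1 b y)
    convert hmul using 1
    case e'_4 => rfl
    case e'_5 => rfl
    case e'_6 => rfl
    case e'_8 => rfl
    rw [← X1_one_mul_S1]
    have hc : Commute T (NormedSpace.exp ((-y) • T)) :=
      ((Commute.refl T).smul_right (-y)).exp_right
    rw [neg_one_smul, ← mul_assoc, ← hc.eq]
    simp [neg_mul]
  have hconst : ∀ y : ℝ, NormedSpace.exp ((-y) • T) * S1 b y
      = NormedSpace.exp ((-(0:ℝ)) • T) * S1 b 0 := by
    intro y
    exact is_const_of_deriv_eq_zero (fun z => (hg z).differentiableAt)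
      (fun z => (hg z).deriv) y 0
  have key : ∀ y : ℝ, NormedSpace.exp ((-y) • T) * S1 b y = 1 := by
    intro y
    rw [hconst y, one_matrix_eq, neg_zero, zero_smul, NormedSpace.exp_zero, one_mul]
  have hinv : ∀ y : ℝ, NormedSpace.exp (y • T) * NormedSpace.exp ((-y) • T) = 1 := by
    intro y
    rw [← Matrix.exp_add_of_commute _ _ (((Commute.refl T).smul_left y).smul_right (-y))]
    rw [← add_smul, add_neg_cancel, zero_smul, NormedSpace.exp_zero]
  have := congrArg (fun M => NormedSpace.exp (x • T) * M) (key x)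
  simp only [← mul_assoc, hinv x, one_mul, mul_one] at this
  rw [hX, this]
open Kronecker
variable {n m : Type*} [Fintype n] [DecidableEq n] [Fintype m] [DecidableEq m]
/-- `A ↦ A ⊗ₖ 1` as an algebra homomorphism. -/
noncomputable def kronLeftAlgHom (n m : Type*) [Fintype n] [DecidableEq n] [Fintype m]
    [DecidableEq m] : Matrix n n ℝ →ₐ[ℝ] Matrix (n × m) (n × m) ℝ where
  toFun A := A ⊗ₖ (1 : Matrix m m ℝ)
  map_one' := Matrix.one_kronecker_one
  map_mul' A B := by rw [← Matrix.mul_kronecker_mul, Matrix.one_mul]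
  map_zero' := Matrix.zero_kronecker _
  map_add' A B := Matrix.add_kronecker A B 1
  commutes' r := by
    simp only [Algebra.algebraMap_eq_smul_one]
    show (r • (1 : Matrix n n ℝ)) ⊗ₖ (1 : Matrix m m ℝ) = r • 1
    rw [Matrix.smul_kronecker, Matrix.one_kronecker_one]
/-- `B ↦ 1 ⊗ₖ B` as an algebra homomorphism. -/
noncomputable def kronRightAlgHom (n m : Type*) [Fintype n] [DecidableEq n] [Fintype m]
    [DecidableEq m] : Matrix m m ℝ →ₐ[ℝ] Matrix (n × m) (n × m) ℝ where
  toFun B := (1 : Matrix n n ℝ) ⊗ₖ B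
  map_one' := Matrix.one_kronecker_one
  map_mul' A B := by rw [← Matrix.mul_kronecker_mul, Matrix.one_mul]
  map_zero' := Matrix.kronecker_zero _
  map_add' A B := Matrix.kronecker_add 1 A B
  commutes' r := by
    simp only [Algebra.algebraMap_eq_smul_one]
    show (1 : Matrix n n ℝ) ⊗ₖ (r • (1 : Matrix m m ℝ)) = r • 1
    rw [Matrix.kronecker_smul, Matrix.one_kronecker_one]
lemma exp_kron_left (A : Matrix n n ℝ) :
    NormedSpace.exp (A ⊗ₖ (1 : Matrix m m ℝ)) = NormedSpace.exp A ⊗ₖ 1 := by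
  letI : SeminormedRing (Matrix n n ℝ) := Matrix.linftyOpSemiNormedRing
  letI : NormedRing (Matrix n n ℝ) := Matrix.linftyOpNormedRing
  letI : NormedAlgebra ℝ (Matrix n n ℝ) := Matrix.linftyOpNormedAlgebra
  letI : NormedAlgebra ℚ (Matrix n n ℝ) := Matrix.linftyOpNormedAlgebra
  letI : SeminormedRing (Matrix (n × m) (n × m) ℝ) := Matrix.linftyOpSemiNormedRing
  letI : NormedRing (Matrix (n × m) (n × m) ℝ) := Matrix.linftyOpNormedRing
  letI : NormedAlgebra ℝ (Matrix (n × m) (n × m) ℝ) := Matrix.linftyOpNormedAlgebra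
  have hcont : Continuous (kronLeftAlgHom n m) :=
    (kronLeftAlgHom n m).toLinearMap.continuous_of_finiteDimensional
  exact (NormedSpace.map_exp (kronLeftAlgHom n m) hcont A).symm
lemma exp_kron_right (B : Matrix m m ℝ) :
    NormedSpace.exp ((1 : Matrix n n ℝ) ⊗ₖ B) = (1 : Matrix n n ℝ) ⊗ₖ NormedSpace.exp B := by
  letI : SeminormedRing (Matrix m m ℝ) := Matrix.linftyOpSemiNormedRing
  letI : NormedRing (Matrix m m ℝ) := Matrix.linftyOpNormedRing
  letI : NormedAlgebra ℝ (Matrix m m ℝ) := Matrix.linftyOpNormedAlgebra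
  letI : NormedAlgebra ℚ (Matrix m m ℝ) := Matrix.linftyOpNormedAlgebra
  letI : SeminormedRing (Matrix (n × m) (n × m) ℝ) := Matrix.linftyOpSemiNormedRing
  letI : NormedRing (Matrix (n × m) (n × m) ℝ) := Matrix.linftyOpNormedRing
  letI : NormedAlgebra ℝ (Matrix (n × m) (n × m) ℝ) := Matrix.linftyOpNormedAlgebra
  have hcont : Continuous (kronRightAlgHom n m) :=
    (kronRightAlgHom n m).toLinearMap.continuous_of_finiteDimensional
  exact (NormedSpace.map_exp (kronRightAlgHom n m) hcont B).symm
lemma exp_kron_sum (A : Matrix n n ℝ) (B : Matrix m m ℝ) :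
    NormedSpace.exp (A ⊗ₖ (1 : Matrix m m ℝ) + (1 : Matrix n n ℝ) ⊗ₖ B)
      = NormedSpace.exp A ⊗ₖ NormedSpace.exp B := by
  have hcomm : Commute (A ⊗ₖ (1 : Matrix m m ℝ)) ((1 : Matrix n n ℝ) ⊗ₖ B) := by
    unfold Commute SemiconjBy
    rw [← Matrix.mul_kronecker_mul, ← Matrix.mul_kronecker_mul, Matrix.one_mul,
      Matrix.mul_one, Matrix.one_mul, Matrix.mul_one]
  rw [Matrix.exp_add_of_commute _ _ hcomm, exp_kron_left, exp_kron_right,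
    ← Matrix.mul_kronecker_mul, Matrix.one_mul, Matrix.mul_one]
lemma exp_reindex (e : n ≃ m) (A : Matrix n n ℝ) :
    NormedSpace.exp (Matrix.reindex e e A) = Matrix.reindex e e (NormedSpace.exp A) := by
  letI : SeminormedRing (Matrix n n ℝ) := Matrix.linftyOpSemiNormedRing
  letI : NormedRing (Matrix n n ℝ) := Matrix.linftyOpNormedRing
  letI : NormedAlgebra ℝ (Matrix n n ℝ) := Matrix.linftyOpNormedAlgebra
  letI : NormedAlgebra ℚ (Matrix n n ℝ) := Matrix.linftyOpNormedAlgebra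
  letI : SeminormedRing (Matrix m m ℝ) := Matrix.linftyOpSemiNormedRing
  letI : NormedRing (Matrix m m ℝ) := Matrix.linftyOpNormedRing
  letI : NormedAlgebra ℝ (Matrix m m ℝ) := Matrix.linftyOpNormedAlgebra
  letI : NormedAlgebra ℚ (Matrix m m ℝ) := Matrix.linftyOpNormedAlgebra
  have hcont : Continuous (Matrix.reindexAlgEquiv ℝ ℝ e) :=
    (Matrix.reindexAlgEquiv ℝ ℝ e).toLinearMap.continuous_of_finiteDimensional
  exact (NormedSpace.map_exp (Matrix.reindexAlgEquiv ℝ ℝ e) hcont A).symm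
/-- The matrix exponential of `X_{b,N}(x)` is `S_{b,N}(x)`. -/
theorem exp_Xmat_eq_Smat (b N : ℕ) (hb : 2 ≤ b) (hN : 1 ≤ N) (x : ℝ) :
    NormedSpace.exp (Xmat b x N) = Smat b x N := by
  clear hb hN
  induction N with
  | zero =>
      show NormedSpace.exp (Xmat b x 0) = Smat b x 0
      rw [show Xmat b x 0 = 0 from rfl, show Smat b x 0 = 1 from rfl,
        NormedSpace.exp_zero]
  | succ N ih =>
      show NormedSpace.exp (Xmat b x (N + 1)) = Smat b x (N + 1)
      rw [show Xmat b x (N + 1) = Matrix.reindex (pke b N) (pke b N)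
            (X1 b x ⊗ₖ (1 : Matrix (Fin (b ^ N)) (Fin (b ^ N)) ℝ) +
              (1 : Matrix (Fin b) (Fin b) ℝ) ⊗ₖ Xmat b x N) from rfl,
        show Smat b x (N + 1) = Matrix.reindex (pke b N) (pke b N)
            (S1 b x ⊗ₖ Smat b x N) from rfl,
        exp_reindex, exp_kron_sum, ih, exp_X1_eq]
end

section
/- Let b ≥ 2 and N ≥ 1 be integers and let A = (a_0, a_1, …, a_{b-1}) be a zero-sum vector of complex numbers. Then there exists a polynomial P_N(x) with complex coefficients such that F_N(x;A) = P_N(x) · ∏_{m=0}^{N-1} (1 - x^{b^m}). -/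
/-- `ptm b n` is the generalized Prouhet–Thue–Morse sequence `u_b(n)`: the sum of the base-`b`
digits of `n`, reduced modulo `b`. -/
def ptm (b n : ℕ) : ℕ := (Nat.digits b n).sum % b

open Polynomial Finset

/-- Splitting a sum over `range (b * n)` according to `k = d + b * m`. -/
lemma ptm_aux_sum_range_mul {M : Type*} [AddCommMonoid M] (b n : ℕ) (f : ℕ → M) :
    ∑ k ∈ Finset.range (b * n), f k
      = ∑ m ∈ Finset.range n, ∑ d ∈ Finset.range b, f (d + b * m) := by
  induction n with
  | zero => simp
  | succ n ih =>
    rw [Nat.mul_succ, Finset.sum_range_add, ih, Finset.sum_range_succ]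
    congr 1
    exact Finset.sum_congr rfl fun d _ => by rw [Nat.add_comm (b * n) d]

/-- Digit-sum recursion. -/
lemma ptm_aux_dsum_add_mul {b : ℕ} (hb : 2 ≤ b) {d : ℕ} (hd : d < b) (m : ℕ) :
    (Nat.digits b (d + b * m)).sum = d + (Nat.digits b m).sum := by
  rcases Nat.eq_zero_or_pos (d + b * m) with h | h
  · have hd0 : d = 0 := by omega
    have hm0 : m = 0 := by
      by_contra hm
      have : b ≤ b * m := Nat.le_mul_of_pos_right b (Nat.pos_of_ne_zero hm)
      omega
    subst hd0; subst hm0; simp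
  · rw [Nat.digits_def' (by omega : 1 < b) h, List.sum_cons]
    have h1 : (d + b * m) % b = d := by
      rw [Nat.add_mul_mod_self_left, Nat.mod_eq_of_lt hd]
    have h2 : (d + b * m) / b = m := by
      rw [Nat.add_mul_div_left _ _ (by omega : 0 < b), Nat.div_eq_of_lt hd, Nat.zero_add]
    rw [h1, h2]

/-- The product formula for the character PTM polynomial. -/
lemma ptm_aux_prod_formula (b : ℕ) (hb : 2 ≤ b) (ζ : ℂ) :
    ∀ N j : ℕ,
      (∑ n ∈ Finset.range (b ^ N),
          Polynomial.C (ζ ^ (Nat.digits b n).sum) * Polynomial.X ^ (n * b ^ j)) =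
        ∏ m ∈ Finset.range N,
          (∑ d ∈ Finset.range b, Polynomial.C (ζ ^ d) * Polynomial.X ^ (d * b ^ (m + j))) := by
  intro N
  induction N with
  | zero => intro j; simp
  | succ N ih =>
    intro j
    rw [Finset.prod_range_succ']
    have hpow : b ^ (N + 1) = b * b ^ N := by ring
    rw [hpow, ptm_aux_sum_range_mul]
    have key : ∀ m ∈ Finset.range (b ^ N),
        (∑ d ∈ Finset.range b,
            Polynomial.C (ζ ^ (Nat.digits b (d + b * m)).sum)
              * Polynomial.X ^ ((d + b * m) * b ^ j))
          = (Polynomial.C (ζ ^ (Nat.digits b m).sum) * Polynomial.X ^ (m * b ^ (j + 1)))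
              * (∑ d ∈ Finset.range b,
                  Polynomial.C (ζ ^ d) * Polynomial.X ^ (d * b ^ (0 + j))) := by
      intro m _
      rw [Finset.mul_sum]
      refine Finset.sum_congr rfl fun d hd => ?_
      rw [ptm_aux_dsum_add_mul hb (Finset.mem_range.1 hd)]
      have he : (d + b * m) * b ^ j = d * b ^ (0 + j) + m * b ^ (j + 1) := by ring
      rw [he, pow_add, pow_add, map_mul]
      ring
    rw [Finset.sum_congr rfl key, ← Finset.sum_mul, ih (j + 1)]
    congr 1
    exact Finset.prod_congr rfl fun m _ => by rw [show m + (j + 1) = m + 1 + j by omega]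

/-- Divisibility of each factor by `1 - X ^ e`. -/
lemma ptm_aux_factor_dvd {b : ℕ} (hb : 2 ≤ b) {ζ : ℂ} (hζb : ζ ^ b = 1) (hζ : ζ ≠ 1) (e : ℕ) :
    (1 - Polynomial.X ^ e : Polynomial ℂ)
      ∣ ∑ d ∈ Finset.range b, Polynomial.C (ζ ^ d) * Polynomial.X ^ (d * e) := by
  have hdvd : (1 - Polynomial.X : Polynomial ℂ)
      ∣ ∑ d ∈ Finset.range b, Polynomial.C (ζ ^ d) * Polynomial.X ^ d := by
    have h1 : (Polynomial.X - Polynomial.C 1 : Polynomial ℂ)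
        ∣ ∑ d ∈ Finset.range b, Polynomial.C (ζ ^ d) * Polynomial.X ^ d := by
      rw [Polynomial.dvd_iff_isRoot]
      simp only [Polynomial.IsRoot, Polynomial.eval_finset_sum, Polynomial.eval_mul,
        Polynomial.eval_C, Polynomial.eval_pow, Polynomial.eval_X, one_pow, mul_one]
      rw [geom_sum_eq hζ, hζb, sub_self, zero_div]
    have h2 : (1 - Polynomial.X : Polynomial ℂ) = -(Polynomial.X - Polynomial.C 1) := by
      rw [Polynomial.C_1]; ring
    rw [h2, neg_dvd]; exact h1
  have hmap := map_dvd (Polynomial.aeval (Polynomial.X ^ e : Polynomial ℂ)) hdvd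
  simp only [map_sub, map_one, Polynomial.aeval_X, map_sum, map_mul, map_pow,
    Polynomial.aeval_C, Polynomial.algebraMap_eq] at hmap
  have : ∑ d ∈ Finset.range b, Polynomial.C (ζ ^ d) * Polynomial.X ^ (d * e)
      = ∑ d ∈ Finset.range b, Polynomial.C (ζ ^ d) * (Polynomial.X ^ e) ^ d := by
    exact Finset.sum_congr rfl fun d _ => by rw [← pow_mul, Nat.mul_comm]
  rw [this]
  simp only [Polynomial.C_pow]
  exact hmap

/-- Powers of a `b`-th root of unity only depend on exponents mod `b`. -/
lemma ptm_aux_pow_mod {b : ℕ} {ζ : ℂ} (hζb : ζ ^ b = 1) (m : ℕ) : ζ ^ (m % b) = ζ ^ m := by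
  conv_rhs => rw [← Nat.mod_add_div m b]
  rw [pow_add, pow_mul, hζb, one_pow, mul_one]

/-- Character values on `ptm`. -/
lemma ptm_aux_char (b : ℕ) {ω : ℂ} (hb1 : ω ^ b = 1) (n k : ℕ) :
    ω ^ (ptm b n * k) = (ω ^ k) ^ (Nat.digits b n).sum := by
  have hk : (ω ^ k) ^ b = 1 := by
    rw [← pow_mul, Nat.mul_comm, pow_mul, hb1, one_pow]
  unfold ptm
  rw [Nat.mul_comm, pow_mul, ptm_aux_pow_mod hk]

/-- Discrete Fourier inversion. -/
lemma ptm_aux_dft {b : ℕ} (hb : 2 ≤ b) {ω : ℂ} (hω : IsPrimitiveRoot ω b)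
    (a : Fin b → ℂ) (j : Fin b) :
    a j = ∑ k ∈ Finset.range b,
      ((b : ℂ)⁻¹ * ∑ i : Fin b, a i * (ω ^ ((i : ℕ) * k))⁻¹) * ω ^ ((j : ℕ) * k) := by
  have hbC : (b : ℂ) ≠ 0 := Nat.cast_ne_zero.2 (by omega)
  have hω0 : ω ≠ 0 := hω.ne_zero (by omega)
  have hb1 : ω ^ b = 1 := hω.pow_eq_one
  have inner : ∀ i : Fin b,
      ∑ k ∈ Finset.range b, (ω ^ (j : ℕ) * (ω ^ (i : ℕ))⁻¹) ^ k
        = if i = j then (b : ℂ) else 0 := by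
    intro i
    by_cases h : i = j
    · subst h
      rw [mul_inv_cancel₀ (pow_ne_zero _ hω0)]
      simp
    · have hζb : (ω ^ (j : ℕ) * (ω ^ (i : ℕ))⁻¹) ^ b = 1 := by
        rw [mul_pow, inv_pow, ← pow_mul, ← pow_mul, Nat.mul_comm (j : ℕ) b,
          Nat.mul_comm (i : ℕ) b, pow_mul, pow_mul, hb1, one_pow, one_pow, inv_one, mul_one]
      have hζ1 : ω ^ (j : ℕ) * (ω ^ (i : ℕ))⁻¹ ≠ 1 := by
        intro hc
        exact h (Fin.ext ((hω.pow_inj i.isLt j.isLt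
          ((mul_inv_eq_one₀ (pow_ne_zero _ hω0)).1 hc).symm)))
      rw [geom_sum_eq hζ1, hζb, sub_self, zero_div, if_neg h]
  have swap : ∑ k ∈ Finset.range b,
      ((b : ℂ)⁻¹ * ∑ i : Fin b, a i * (ω ^ ((i : ℕ) * k))⁻¹) * ω ^ ((j : ℕ) * k)
      = (b : ℂ)⁻¹ * ∑ i : Fin b,
          a i * ∑ k ∈ Finset.range b, (ω ^ (j : ℕ) * (ω ^ (i : ℕ))⁻¹) ^ k := by
    have h1 : ∀ k ∈ Finset.range b,
        ((b : ℂ)⁻¹ * ∑ i : Fin b, a i * (ω ^ ((i : ℕ) * k))⁻¹) * ω ^ ((j : ℕ) * k)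
          = (b : ℂ)⁻¹ * ∑ i : Fin b, a i * (ω ^ (j : ℕ) * (ω ^ (i : ℕ))⁻¹) ^ k := by
      intro k _
      rw [mul_assoc, Finset.sum_mul]
      congr 1
      refine Finset.sum_congr rfl fun i _ => ?_
      rw [mul_assoc]
      congr 1
      rw [mul_pow, inv_pow, ← pow_mul, ← pow_mul, Nat.mul_comm (j : ℕ) k,
        Nat.mul_comm (i : ℕ) k, pow_mul, pow_mul, ← pow_mul, ← pow_mul,
        Nat.mul_comm k (j : ℕ), Nat.mul_comm k (i : ℕ)]
      ring
    rw [Finset.sum_congr rfl h1, ← Finset.mul_sum]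
    congr 1
    rw [Finset.sum_comm]
    exact Finset.sum_congr rfl fun i _ => by rw [Finset.mul_sum]
  rw [swap]
  have : ∑ i : Fin b, a i * ∑ k ∈ Finset.range b, (ω ^ (j : ℕ) * (ω ^ (i : ℕ))⁻¹) ^ k
      = a j * (b : ℂ) := by
    rw [Finset.sum_congr rfl fun i _ => by rw [inner i]]
    simp [mul_ite]
  rw [this]
  field_simp

/-- For `b ≥ 2`, `N ≥ 1` and a zero-sum vector `A = (a_0, …, a_{b-1})` of complex numbers,
there exists a polynomial `P_N(x)` with complex coefficients such that the Prouhet–Thue–Morse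
polynomial `F_N(x;A) = ∑_{n=0}^{b^N-1} a_{u_b(n)} x^n` satisfies
`F_N(x;A) = P_N(x) · ∏_{m=0}^{N-1} (1 - x^{b^m})`. -/
theorem ptm_polynomial_factorization (b N : ℕ) (hb : 2 ≤ b) (hN : 1 ≤ N)
    (a : Fin b → ℂ) (ha : ∑ i, a i = 0) :
    ∃ P : Polynomial ℂ,
      (∑ n ∈ Finset.range (b ^ N),
          Polynomial.C (a ⟨ptm b n, Nat.mod_lt _ (by omega)⟩) * Polynomial.X ^ n) =
        P * ∏ m ∈ Finset.range N, (1 - Polynomial.X ^ b ^ m) := by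
  have hb0 : b ≠ 0 := by omega
  set ω : ℂ := Complex.exp (2 * Real.pi * Complex.I / b) with hωdef
  have hω : IsPrimitiveRoot ω b := Complex.isPrimitiveRoot_exp b hb0
  have hb1 : ω ^ b = 1 := hω.pow_eq_one
  set c : ℕ → ℂ := fun k => (b : ℂ)⁻¹ * ∑ i : Fin b, a i * (ω ^ ((i : ℕ) * k))⁻¹ with hc
  -- rewrite F as a sum of character PTM polynomials
  have hF : (∑ n ∈ Finset.range (b ^ N),
        Polynomial.C (a ⟨ptm b n, Nat.mod_lt _ (by omega)⟩) * Polynomial.X ^ n)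
      = ∑ k ∈ Finset.range b, Polynomial.C (c k)
          * ∑ n ∈ Finset.range (b ^ N),
              Polynomial.C ((ω ^ k) ^ (Nat.digits b n).sum) * Polynomial.X ^ n := by
    have step1 : ∀ n ∈ Finset.range (b ^ N),
        Polynomial.C (a ⟨ptm b n, Nat.mod_lt _ (by omega)⟩) * Polynomial.X ^ n
          = ∑ k ∈ Finset.range b, Polynomial.C (c k)
              * (Polynomial.C ((ω ^ k) ^ (Nat.digits b n).sum) * Polynomial.X ^ n) := by
      intro n _
      rw [ptm_aux_dft hb hω a ⟨ptm b n, Nat.mod_lt _ (by omega)⟩]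
      rw [map_sum, Finset.sum_mul]
      refine Finset.sum_congr rfl fun k _ => ?_
      have hval : ((⟨ptm b n, Nat.mod_lt _ (by omega)⟩ : Fin b) : ℕ) = ptm b n := rfl
      rw [hval, ptm_aux_char b hb1 n k, map_mul, mul_assoc]
    rw [Finset.sum_congr rfl step1, Finset.sum_comm]
    exact Finset.sum_congr rfl fun k _ => by rw [Finset.mul_sum]
  rw [hF]
  have hdvd : (∏ m ∈ Finset.range N, (1 - Polynomial.X ^ b ^ m : Polynomial ℂ))
      ∣ ∑ k ∈ Finset.range b, Polynomial.C (c k)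
          * ∑ n ∈ Finset.range (b ^ N),
              Polynomial.C ((ω ^ k) ^ (Nat.digits b n).sum) * Polynomial.X ^ n := by
    refine Finset.dvd_sum fun k hk => ?_
    rcases Nat.eq_zero_or_pos k with rfl | hkpos
    · have hc0 : c 0 = 0 := by
        rw [hc]
        simp [ha]
      rw [hc0]
      simp
    · have hG : (∑ n ∈ Finset.range (b ^ N),
          Polynomial.C ((ω ^ k) ^ (Nat.digits b n).sum) * Polynomial.X ^ n)
          = ∏ m ∈ Finset.range N,
              ∑ d ∈ Finset.range b, Polynomial.C ((ω ^ k) ^ d) * Polynomial.X ^ (d * b ^ m) := by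
        have := ptm_aux_prod_formula b hb (ω ^ k) N 0
        simpa using this
      rw [hG]
      refine Dvd.dvd.mul_left ?_ _
      refine Finset.prod_dvd_prod_of_dvd _ _ fun m _ => ?_
      exact ptm_aux_factor_dvd hb
        (by rw [← pow_mul, Nat.mul_comm k b, pow_mul, hb1, one_pow])
        (hω.pow_ne_one_of_pos_of_lt hkpos.ne' (Finset.mem_range.1 hk)) _
  obtain ⟨P, hP⟩ := hdvd
  exact ⟨P, by rw [hP, mul_comm]⟩
end
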